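/- arXiv:1412.5358 — 7 statements merged into one kernel-verified Lean document; each statement's English description precedes it below -/
import Mathlib

section
/- Let H be a group admitting no surjective group homomorphism onto ℤ, and let φ be an automorphism of H. Then every automorphism ψ of the mapping torus H_φ = H ⋊_φ ℤ maps the subgroup ι(H) onto itself, i.e. ψ(ι(H)) = ι(H). -/
/-- The mapping torus `H ⋊_φ ℤ` of an automorphism `φ` of `H`: the semidirect
product in which the generator `t` of the `ℤ`-factor acts by
`t · ι(h) · t⁻¹ = ι(φ(h))`. -/
abbrev MappingTorus (H : Type*) [Group H] (φ : MulAut H) : Type _ :=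
  H ⋊[zpowersHom (MulAut H) φ] Multiplicative ℤ

/-- The canonical inclusion `ι : H → H ⋊_φ ℤ`. -/
abbrev MappingTorus.ι {H : Type*} [Group H] (φ : MulAut H) : H →* MappingTorus H φ :=
  SemidirectProduct.inl

/-- The canonical generator `t` of the `ℤ`-factor of `H ⋊_φ ℤ`. -/
abbrev MappingTorus.t {H : Type*} [Group H] (φ : MulAut H) : MappingTorus H φ :=
  SemidirectProduct.inr (Multiplicative.ofAdd 1)

/-- If `H` admits no surjection onto `ℤ`, every homomorphism `H → ℤ` is trivial. -/
lemma triv_hom {H : Type*} [Group H]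
    (hH : ∀ f : H →* Multiplicative ℤ, ¬ Function.Surjective f)
    (g : H →* Multiplicative ℤ) : ∀ h, g h = 1 := by
  by_contra hne
  push_neg at hne
  let g' : Additive H →+ ℤ := AddMonoidHom.mk' (fun h => (g h.toMul).toAdd)
    (by intros a b; simp)
  obtain ⟨m, hm⟩ := Int.subgroup_cyclic g'.range
  rw [← AddSubgroup.zmultiples_eq_closure] at hm
  have hmem : ∀ h : H, (m : ℤ) ∣ (g h).toAdd := by
    intro h
    have : (g h).toAdd ∈ g'.range := ⟨Additive.ofMul h, rfl⟩
    rw [hm, AddSubgroup.mem_zmultiples_iff] at this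
    obtain ⟨k, hk⟩ := this
    exact ⟨k, by rw [← hk, smul_eq_mul, mul_comm]⟩
  have hm0 : m ≠ 0 := by
    rintro rfl
    obtain ⟨h, hh⟩ := hne
    obtain ⟨k, hk⟩ := hmem h
    apply hh
    have : (g h).toAdd = 0 := by omega
    exact Multiplicative.toAdd.injective this
  obtain ⟨hm', hhm'⟩ : ∃ h : H, (g h).toAdd = m := by
    have : (m : ℤ) ∈ g'.range := by rw [hm]; exact AddSubgroup.mem_zmultiples m
    obtain ⟨x, hx⟩ := this
    exact ⟨Additive.toMul x, hx⟩
  let F : H →* Multiplicative ℤ :=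
    { toFun := fun h => Multiplicative.ofAdd ((g h).toAdd / m)
      map_one' := by simp
      map_mul' := by
        intro a b
        simp only [map_mul, toAdd_mul]
        rw [Int.add_ediv_of_dvd_left (hmem a)]
        rfl }
  apply hH F
  intro k
  refine ⟨hm' ^ k.toAdd, ?_⟩
  show Multiplicative.ofAdd ((g (hm' ^ k.toAdd)).toAdd / m) = k
  rw [map_zpow]
  simp only [toAdd_zpow, hhm', smul_eq_mul]
  rw [Int.mul_ediv_cancel _ hm0]
  rfl

/-- Any automorphism of the mapping torus sends `ι(H)` into `ι(H)`. -/
lemma map_le_aux {H : Type*} [Group H]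
    (hH : ∀ f : H →* Multiplicative ℤ, ¬ Function.Surjective f)
    (φ : MulAut H) (ψ : MulAut (MappingTorus H φ)) :
    Subgroup.map ψ.toMonoidHom (MappingTorus.ι φ).range ≤ (MappingTorus.ι φ).range := by
  rintro x ⟨y, ⟨h, rfl⟩, rfl⟩
  rw [SemidirectProduct.range_inl_eq_ker_rightHom, MonoidHom.mem_ker]
  exact triv_hom hH
    (SemidirectProduct.rightHom.comp (ψ.toMonoidHom.comp SemidirectProduct.inl)) h

theorem aut_of_mappingTorus_fixes_base (H : Type*) [Group H]
    (hH : ∀ f : H →* Multiplicative ℤ, ¬ Function.Surjective f)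
    (φ : MulAut H) (ψ : MulAut (MappingTorus H φ)) :
    Subgroup.map ψ.toMonoidHom (MappingTorus.ι φ).range = (MappingTorus.ι φ).range := by
  refine le_antisymm (map_le_aux hH φ ψ) ?_
  intro x hx
  have h1 : ψ⁻¹.toMonoidHom x ∈ (MappingTorus.ι φ).range :=
    map_le_aux hH φ ψ⁻¹ ⟨x, hx, rfl⟩
  exact ⟨ψ⁻¹.toMonoidHom x, h1, by simp⟩
end

section
/- Let H be a group admitting no surjective group homomorphism onto ℤ, let φ be an automorphism of H, and let ψ be any automorphism of the mapping torus H_φ = H ⋊_φ ℤ. Then there exist an automorphism δ of H, an element g ∈ H, and ε ∈ {1, −1} such that ψ(ι(h)) = ι(δ(h)) for all h ∈ H and ψ(t) = ι(g)·t^ε. Moreover, if ε = 1 then δ(φ(h)) = g·φ(δ(h))·g⁻¹ for all h ∈ H (so the class of δ centralizes the class of φ in Out(H)), and if ε = −1 then δ(φ(h)) = g·φ⁻¹(δ(h))·g⁻¹ for all h ∈ H (so the class of δ conjugates the class of φ to its inverse in Out(H)). -/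
/-- If `H` has no surjective hom onto `ℤ`, every hom `H → ℤ` is trivial. -/
lemma triv_hom_of_no_surj {H : Type*} [Group H]
    (hH : ∀ f : H →* Multiplicative ℤ, ¬ Function.Surjective f)
    (f : H →* Multiplicative ℤ) (h : H) : f h = 1 := by
  by_contra hc
  set F : H → ℤ := fun h => Multiplicative.toAdd (f h) with hF
  have hFmul : ∀ a b : H, F (a * b) = F a + F b := by intro a b; simp [hF]
  have hFinv : ∀ a : H, F a⁻¹ = - F a := by intro a; simp [hF]
  let S : AddSubgroup ℤ :=
  { carrier := Set.range F
    add_mem' := by rintro x y ⟨a, rfl⟩ ⟨b, rfl⟩; exact ⟨a * b, hFmul a b⟩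
    zero_mem' := ⟨1, by simp [hF]⟩
    neg_mem' := by rintro x ⟨a, rfl⟩; exact ⟨a⁻¹, hFinv a⟩ }
  obtain ⟨a, hS⟩ := Int.subgroup_cyclic S
  have hmem : ∀ x : H, ∃ n : ℤ, n • a = F x := by
    intro x
    have : F x ∈ S := ⟨x, rfl⟩
    rw [hS, AddSubgroup.mem_closure_singleton] at this
    exact this
  have ha0 : a ≠ 0 := by
    rintro rfl
    obtain ⟨n, hn⟩ := hmem h
    have h0 : F h = 0 := by simpa using hn.symm
    apply hc
    have := congrArg Multiplicative.ofAdd h0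
    simpa [hF] using this
  have hdvd : ∀ x : H, a ∣ F x := by
    intro x; obtain ⟨n, hn⟩ := hmem x; exact ⟨n, by rw [← hn, smul_eq_mul, mul_comm]⟩
  have haS : a ∈ S := by
    rw [hS]; exact AddSubgroup.mem_closure_singleton.2 ⟨1, one_smul _ _⟩
  obtain ⟨h0, hh0⟩ := haS
  refine hH { toFun := fun x => Multiplicative.ofAdd (F x / a)
              map_one' := by simp [hF]
              map_mul' := ?_ } ?_
  · intro x y
    obtain ⟨m, hm⟩ := hdvd x
    obtain ⟨n, hn⟩ := hdvd y
    have key : (a * m + a * n) / a = (a * m) / a + (a * n) / a := by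
      rw [← mul_add, Int.mul_ediv_cancel_left _ ha0, Int.mul_ediv_cancel_left _ ha0,
        Int.mul_ediv_cancel_left _ ha0]
    simp only [hFmul, hm, hn, key, ofAdd_add]
  · intro n
    refine ⟨h0 ^ Multiplicative.toAdd n, ?_⟩
    have : F (h0 ^ Multiplicative.toAdd n) = Multiplicative.toAdd n * a := by
      have hh0' : Multiplicative.toAdd (f h0) = a := hh0
      rw [hF]
      simp only [map_zpow, toAdd_zpow, smul_eq_mul, hh0']
    simp only [MonoidHom.coe_mk, OneHom.coe_mk, this, Int.mul_ediv_cancel _ ha0]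
    simp

theorem aut_of_mappingTorus_form (H : Type*) [Group H]
    (hH : ∀ f : H →* Multiplicative ℤ, ¬ Function.Surjective f)
    (φ : MulAut H) (ψ : MulAut (MappingTorus H φ)) :
    ∃ (δ : MulAut H) (g : H) (ε : ℤ), (ε = 1 ∨ ε = -1) ∧
      (∀ h : H, ψ (MappingTorus.ι φ h) = MappingTorus.ι φ (δ h)) ∧
      ψ (MappingTorus.t φ) = MappingTorus.ι φ g * (MappingTorus.t φ) ^ ε ∧
      (ε = 1 → ∀ h : H, δ (φ h) = g * φ (δ h) * g⁻¹) ∧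
      (ε = -1 → ∀ h : H, δ (φ h) = g * φ⁻¹ (δ h) * g⁻¹) := by
  classical
  set G := MappingTorus H φ
  -- every automorphism of G sends inl H into inl H
  have key : ∀ (χ : MulAut G) (h : H), χ (SemidirectProduct.inl h)
      = SemidirectProduct.inl ((χ (SemidirectProduct.inl h)).left) := by
    intro χ h
    have := triv_hom_of_no_surj hH
      (SemidirectProduct.rightHom.comp (χ.toMonoidHom.comp SemidirectProduct.inl)) h
    simp only [MonoidHom.comp_apply, MulEquiv.coe_toMonoidHom,
      SemidirectProduct.rightHom_eq_right] at this
    ext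
    · rfl
    · simpa using this
  -- d respects multiplication
  have keymul : ∀ (χ : MulAut G) (a b : H),
      (χ (SemidirectProduct.inl (a * b))).left
        = (χ (SemidirectProduct.inl a)).left * (χ (SemidirectProduct.inl b)).left := by
    intro χ a b
    apply SemidirectProduct.inl_injective (φ := zpowersHom (MulAut H) φ)
    rw [← key χ (a * b), map_mul, map_mul, key χ a, key χ b, ← map_mul]
    simp
  let δ : MulAut H :=
  { toFun := fun h => (ψ (SemidirectProduct.inl h)).left
    invFun := fun h => (ψ⁻¹ (SemidirectProduct.inl h)).left
    left_inv := by
      intro h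
      apply SemidirectProduct.inl_injective (φ := zpowersHom (MulAut H) φ)
      rw [← key ψ⁻¹, ← key ψ]
      simp
    right_inv := by
      intro h
      apply SemidirectProduct.inl_injective (φ := zpowersHom (MulAut H) φ)
      rw [← key ψ, ← key ψ⁻¹]
      simp
    map_mul' := keymul ψ }
  set g : H := (ψ (MappingTorus.t φ)).left with hg
  set ε : ℤ := Multiplicative.toAdd ((ψ (MappingTorus.t φ)).right) with hε
  -- t^n = inr (ofAdd n)
  have ht : ∀ n : ℤ, (MappingTorus.t φ) ^ n = SemidirectProduct.inr (Multiplicative.ofAdd n) := by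
    intro n
    rw [MappingTorus.t, ← map_zpow]
    congr 1
    rw [← ofAdd_zsmul, smul_eq_mul, mul_one]
  have hinr : ∀ r : Multiplicative ℤ,
      (SemidirectProduct.inr r : G) = (MappingTorus.t φ) ^ (Multiplicative.toAdd r) := by
    intro r; rw [ht]; simp
  -- ε is ±1
  have hεpm : ε = 1 ∨ ε = -1 := by
    obtain ⟨x, hx⟩ := (SemidirectProduct.rightHom_surjective.comp ψ.surjective)
      (Multiplicative.ofAdd (1 : ℤ))
    have hx' : SemidirectProduct.rightHom (ψ x) = Multiplicative.ofAdd 1 := hx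
    rw [← SemidirectProduct.inl_left_mul_inr_right x, map_mul, map_mul, key ψ] at hx'
    rw [hinr x.right, map_zpow, map_zpow] at hx'
    simp only [SemidirectProduct.rightHom_inl, one_mul, SemidirectProduct.rightHom_eq_right] at hx'
    have : Multiplicative.toAdd x.right * ε = 1 := by
      have := congrArg Multiplicative.toAdd hx'
      simpa [hε] using this
    rcases Int.isUnit_iff.1 (IsUnit.of_mul_eq_one (a := ε) _ ((mul_comm _ _).trans this)) with h1 | h1
    · exact Or.inl h1
    · exact Or.inr h1
  -- form of ψ t
  have hψt : ψ (MappingTorus.t φ) = MappingTorus.ι φ g * (MappingTorus.t φ) ^ ε := by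
    rw [ht, hε, hg]
    exact (SemidirectProduct.inl_left_mul_inr_right _).symm
  -- conjugation relation
  have hconj : ∀ h : H, δ (φ h) = g * (φ ^ ε) (δ h) * g⁻¹ := by
    intro h
    have h1 : (SemidirectProduct.inl (φ h) : G)
        = MappingTorus.t φ * SemidirectProduct.inl h * (MappingTorus.t φ)⁻¹ := by
      have := SemidirectProduct.inl_aut (φ := zpowersHom (MulAut H) φ)
        (Multiplicative.ofAdd (1 : ℤ)) h
      simpa [zpowersHom_apply] using this
    have h2 : (SemidirectProduct.inl ((φ ^ ε) (δ h)) : G)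
        = (MappingTorus.t φ) ^ ε * SemidirectProduct.inl (δ h) * ((MappingTorus.t φ) ^ ε)⁻¹ := by
      have := SemidirectProduct.inl_aut (φ := zpowersHom (MulAut H) φ)
        (Multiplicative.ofAdd ε) (δ h)
      rw [ht ε]
      simpa [zpowersHom_apply] using this
    apply SemidirectProduct.inl_injective (φ := zpowersHom (MulAut H) φ)
    calc (SemidirectProduct.inl (δ (φ h)) : G)
        = ψ (SemidirectProduct.inl (φ h)) := (key ψ (φ h)).symm
      _ = ψ (MappingTorus.t φ) * ψ (SemidirectProduct.inl h) * (ψ (MappingTorus.t φ))⁻¹ := by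
          rw [h1]; simp [map_mul]
      _ = SemidirectProduct.inl g * ((MappingTorus.t φ) ^ ε * SemidirectProduct.inl (δ h)
            * ((MappingTorus.t φ) ^ ε)⁻¹) * (SemidirectProduct.inl g)⁻¹ := by
          rw [hψt, key ψ h]
          simp only [mul_inv_rev, mul_assoc]
          rfl
      _ = SemidirectProduct.inl (g * (φ ^ ε) (δ h) * g⁻¹) := by
          rw [← h2, ← map_inv, ← map_mul, ← map_mul]
  refine ⟨δ, g, ε, hεpm, fun h => key ψ h, hψt, ?_, ?_⟩
  · intro he h
    have := hconj h
    rw [he] at this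
    simpa using this
  · intro he h
    have := hconj h
    rw [he] at this
    simpa [zpow_neg_one] using this
end

section
/- Let H be a group with trivial center and admitting no surjective group homomorphism onto ℤ, and let φ be an automorphism of H. Let Out⁰(H_φ) denote the set of elements of Out(H_φ) that admit a representative ψ ∈ Aut(H_φ) with ψ(ι(H)) = ι(H) and ψ(t) ∈ ι(H)·t. Then Out⁰(H_φ) is a subgroup of Out(H_φ); if the class of φ is conjugate in Out(H) to the class of φ⁻¹, then Out⁰(H_φ) has index two in Out(H_φ), and otherwise Out⁰(H_φ) = Out(H_φ). -/
instance innRangeNormal (G : Type*) [Group G] :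
    ((MulAut.conj : G →* MulAut G).range).Normal := by
  constructor
  rintro _ ⟨x, rfl⟩ g
  refine ⟨g x, ?_⟩
  ext h
  simp [MulAut.conj_apply, MulAut.mul_apply, map_mul, map_inv, mul_assoc]

/-- The outer automorphism group: automorphisms modulo inner automorphisms. -/
abbrev Out (G : Type*) [Group G] :=
  MulAut G ⧸ (MulAut.conj : G →* MulAut G).range

namespace MT
open SemidirectProduct MappingTorus

variable {H : Type*} [Group H] {φ : MulAut H}

lemma hom_trivial {H : Type*} [Group H]
    (hH : ∀ f : H →* Multiplicative ℤ, ¬ Function.Surjective f)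
    (f : H →* Multiplicative ℤ) (h : H) : f h = 1 := by
  set R : AddSubgroup ℤ :=
    { carrier := Set.range fun h => Multiplicative.toAdd (f h)
      zero_mem' := ⟨1, by simp⟩
      add_mem' := by rintro _ _ ⟨a, rfl⟩ ⟨b, rfl⟩; exact ⟨a * b, by simp⟩
      neg_mem' := by rintro _ ⟨a, rfl⟩; exact ⟨a⁻¹, by simp⟩ } with hR
  obtain ⟨d, hd⟩ := Int.subgroup_cyclic R
  rw [← AddSubgroup.zmultiples_eq_closure] at hd
  rcases eq_or_ne d 0 with rfl | hd0
  · have : Multiplicative.toAdd (f h) ∈ R := ⟨h, rfl⟩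
    rw [hd, Int.mem_zmultiples_iff] at this
    have h0 : Multiplicative.toAdd (f h) = 0 := by simpa using this
    simpa using congrArg Multiplicative.ofAdd h0
  · exfalso
    have hdvd : ∀ x : H, d ∣ Multiplicative.toAdd (f x) := by
      intro x
      have : Multiplicative.toAdd (f x) ∈ R := ⟨x, rfl⟩
      rwa [hd, Int.mem_zmultiples_iff] at this
    set F : H →* Multiplicative ℤ :=
      { toFun := fun x => Multiplicative.ofAdd (Multiplicative.toAdd (f x) / d)
        map_one' := by simp
        map_mul' := by
          intro a b
          obtain ⟨p, hp⟩ := hdvd a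
          obtain ⟨q, hq⟩ := hdvd b
          have : Multiplicative.toAdd (f (a * b)) = d * (p + q) := by
            rw [map_mul, toAdd_mul, hp, hq]; ring
          simp only [this, hp, hq, ← ofAdd_add]
          rw [Int.mul_ediv_cancel_left _ hd0, Int.mul_ediv_cancel_left _ hd0,
            Int.mul_ediv_cancel_left _ hd0] } with hF
    apply hH F
    intro n
    have : d * Multiplicative.toAdd n ∈ R := by
      rw [hd, Int.mem_zmultiples_iff]; exact ⟨_, rfl⟩
    obtain ⟨x, hx⟩ := this
    exact ⟨x, by simp only [hF, MonoidHom.coe_mk, OneHom.coe_mk, hx,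
      Int.mul_ediv_cancel_left _ hd0]; simp⟩

variable (hH : ∀ f : H →* Multiplicative ℤ, ¬ Function.Surjective f)
include hH

/-- key: rightHom kills ψ (inl h) -/
lemma rh_psi_inl (ψ : MulAut (MappingTorus H φ)) (h : H) :
    rightHom (ψ (ι φ h)) = 1 :=
  hom_trivial hH ((rightHom.comp ψ.toMonoidHom).comp (ι φ)) h

omit hH in
lemma eq_inl_of_rh {x : MappingTorus H φ} (hx : rightHom x = 1) : x = ι φ x.left := by
  have := (inl_left_mul_inr_right x).symm
  rwa [show x.right = rightHom x from rfl, hx, map_one, mul_one] at this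

omit hH in
lemma inr_eq_t_zpow (n : ℤ) : (inr (Multiplicative.ofAdd n) : MappingTorus H φ) = t φ ^ n := by
  rw [← map_zpow]
  congr 1
  rw [← ofAdd_zsmul]
  norm_num

/-- degree -/
def d (ψ : MulAut (MappingTorus H φ)) : ℤ := Multiplicative.toAdd (rightHom (ψ (t φ)))

lemma d_eq (ψ : MulAut (MappingTorus H φ)) (x : MappingTorus H φ) :
    Multiplicative.toAdd (rightHom (ψ x)) = Multiplicative.toAdd (rightHom x) * d ψ := by
  conv_lhs => rw [← inl_left_mul_inr_right x]
  rw [map_mul, map_mul, rh_psi_inl hH ψ x.left, one_mul,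
    show x.right = Multiplicative.ofAdd (Multiplicative.toAdd x.right) from rfl,
    inr_eq_t_zpow, map_zpow, map_zpow]
  simp [d, show rightHom x = x.right from rfl]

omit hH in
lemma d_one : d (1 : MulAut (MappingTorus H φ)) = 1 := by simp [d, t]

lemma d_mul (ψ χ : MulAut (MappingTorus H φ)) : d (ψ * χ) = d ψ * d χ := by
  have := d_eq hH ψ (χ (t φ))
  simpa [d, mul_comm] using this

lemma d_pm (ψ : MulAut (MappingTorus H φ)) : d ψ = 1 ∨ d ψ = -1 := by
  have h1 : d ψ * d ψ⁻¹ = 1 := by rw [← d_mul hH ψ ψ⁻¹, mul_inv_cancel, d_one]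
  exact Int.isUnit_iff.mp (IsUnit.of_mul_eq_one _ h1)

omit hH in
lemma d_conj (g : MappingTorus H φ) : d (MulAut.conj g) = 1 := by
  simp [d, t, MulAut.conj_apply, map_mul, map_inv, mul_comm]

/-- degree on the outer automorphism group -/
def dbar : Out (MappingTorus H φ) → ℤ :=
  fun x => Quotient.liftOn' x (d (φ := φ)) (by
    intro a b hab
    rw [QuotientGroup.leftRel_apply] at hab
    obtain ⟨g, hg⟩ := hab
    have hb : b = a * MulAut.conj g := by rw [hg]; group
    rw [hb, d_mul hH a (MulAut.conj g), d_conj, mul_one])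

@[simp] lemma dbar_mk (ψ : MulAut (MappingTorus H φ)) :
    dbar hH (QuotientGroup.mk ψ) = d ψ := rfl

lemma dbar_mul (x y : Out (MappingTorus H φ)) :
    dbar hH (x * y) = dbar hH x * dbar hH y := by
  induction x using QuotientGroup.induction_on
  induction y using QuotientGroup.induction_on
  rw [← QuotientGroup.mk_mul, dbar_mk, dbar_mk, dbar_mk, d_mul hH]

lemma dbar_pm (x : Out (MappingTorus H φ)) :
    dbar hH x = 1 ∨ dbar hH x = -1 := by
  induction x using QuotientGroup.induction_on
  rw [dbar_mk]
  exact d_pm hH _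

/-- the subgroup -/
def S0 : Subgroup (Out (MappingTorus H φ)) where
  carrier := {x | dbar hH x = 1}
  one_mem' := by
    show dbar hH (QuotientGroup.mk 1) = 1
    rw [dbar_mk, d_one]
  mul_mem' := by
    intro a b ha hb
    show dbar hH (a * b) = 1
    rw [dbar_mul hH, ha, hb, mul_one]
  inv_mem' := by
    intro a ha
    show dbar hH a⁻¹ = 1
    have : dbar hH (a * a⁻¹) = 1 := by
      rw [mul_inv_cancel]
      show dbar hH (QuotientGroup.mk 1) = 1
      rw [dbar_mk, d_one]
    rw [dbar_mul hH, ha, one_mul] at this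
    exact this

@[simp] lemma mem_S0 (x : Out (MappingTorus H φ)) : x ∈ S0 hH ↔ dbar hH x = 1 := Iff.rfl

lemma map_range (ψ : MulAut (MappingTorus H φ)) :
    Subgroup.map ψ.toMonoidHom (ι φ).range = (ι φ).range := by
  apply le_antisymm
  · rintro _ ⟨_, ⟨h, rfl⟩, rfl⟩
    exact ⟨_, (eq_inl_of_rh (rh_psi_inl hH ψ h)).symm⟩
  · rintro _ ⟨h, rfl⟩
    refine ⟨ψ⁻¹ (ι φ h), ⟨_, (eq_inl_of_rh (rh_psi_inl hH ψ⁻¹ h)).symm⟩, ?_⟩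
    show ψ (ψ⁻¹ (ι φ h)) = ι φ h
    exact ψ.apply_symm_apply _

lemma mem_S0_iff (x : Out (MappingTorus H φ)) :
    x ∈ S0 hH ↔ ∃ ψ : MulAut (MappingTorus H φ),
      (QuotientGroup.mk ψ : Out (MappingTorus H φ)) = x ∧
      Subgroup.map ψ.toMonoidHom (ι φ).range = (ι φ).range ∧
      ∃ g : H, ψ (t φ) = ι φ g * t φ := by
  constructor
  · intro hx
    induction x using QuotientGroup.induction_on with
    | H ψ =>
    rw [mem_S0, dbar_mk] at hx
    refine ⟨ψ, rfl, map_range hH ψ, (ψ (t φ)).left, ?_⟩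
    have hr : rightHom (ψ (t φ)) = Multiplicative.ofAdd 1 := by
      have := congrArg Multiplicative.ofAdd hx
      exact this
    conv_lhs => rw [← inl_left_mul_inr_right (ψ (t φ))]
    congr 1
    rw [show (ψ (t φ)).right = rightHom (ψ (t φ)) from rfl, hr]
  · rintro ⟨ψ, rfl, -, g, hg⟩
    rw [mem_S0, dbar_mk]
    simp [d, hg, t]

omit hH in
lemma t_conj (x : H) : t φ * ι φ x * (t φ)⁻¹ = ι φ (φ x) := by
  have h := inl_aut (φ := zpowersHom (MulAut H) φ) (Multiplicative.ofAdd 1) x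
  rw [map_inv] at h
  rw [← h]
  congr 1

omit hH in
lemma t_conj_inv (y : H) : (t φ)⁻¹ * ι φ y * t φ = ι φ (φ⁻¹ y) := by
  have := t_conj (φ := φ) (φ⁻¹ y)
  rw [MulAut.apply_inv_self] at this
  rw [← this]
  group

/-- the induced automorphism of H -/
def alpha (ψ : MulAut (MappingTorus H φ)) : MulAut H where
  toFun h := (ψ (ι φ h)).left
  invFun h := (ψ⁻¹ (ι φ h)).left
  left_inv h := by
    dsimp only
    rw [← eq_inl_of_rh (rh_psi_inl hH ψ h)]
    show (ψ⁻¹ (ψ (ι φ h))).left = h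
    rw [ψ.inv_apply_self, left_inl]
  right_inv h := by
    dsimp only
    rw [← eq_inl_of_rh (rh_psi_inl hH ψ⁻¹ h)]
    show (ψ (ψ⁻¹ (ι φ h))).left = h
    rw [ψ.apply_inv_self, left_inl]
  map_mul' a b := by
    have h1 := eq_inl_of_rh (rh_psi_inl hH ψ a)
    have h2 := eq_inl_of_rh (rh_psi_inl hH ψ b)
    show (ψ (ι φ (a * b))).left = _
    rw [map_mul, map_mul, h1, h2, ← map_mul, left_inl]
    simp only [left_inl]

lemma psi_inl (ψ : MulAut (MappingTorus H φ)) (h : H) :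
    ψ (ι φ h) = ι φ (alpha hH ψ h) :=
  eq_inl_of_rh (rh_psi_inl hH ψ h)

lemma isConj_of_neg (ψ : MulAut (MappingTorus H φ)) (hψ : d ψ = -1) :
    IsConj (QuotientGroup.mk φ : Out H) (QuotientGroup.mk φ : Out H)⁻¹ := by
  set α := alpha hH ψ with hα
  set k := (ψ (t φ)).left with hk
  have hkt : ψ (t φ) = ι φ k * (t φ)⁻¹ := by
    have hr : rightHom (ψ (t φ)) = Multiplicative.ofAdd (-1) := by
      have := congrArg Multiplicative.ofAdd hψ
      exact this
    conv_lhs => rw [← inl_left_mul_inr_right (ψ (t φ))]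
    congr 1
    rw [show (ψ (t φ)).right = rightHom (ψ (t φ)) from rfl, hr, inr_eq_t_zpow, zpow_neg_one]
  have hrel : ∀ x, α (φ x) = k * φ⁻¹ (α x) * k⁻¹ := by
    intro x
    have h0 := congrArg ψ (t_conj (φ := φ) x)
    rw [map_mul, map_mul, map_inv, psi_inl hH ψ (φ x), psi_inl hH ψ x, hkt] at h0
    have h1 : ι φ k * ((t φ)⁻¹ * ι φ (α x) * t φ) * (ι φ k)⁻¹ = ι φ (α (φ x)) := by
      rw [← h0, hα]; group
    rw [t_conj_inv, ← map_inv, ← map_mul, ← map_mul] at h1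
    exact (inl_injective h1).symm
  have heq : α * φ = MulAut.conj k * (φ⁻¹ * α) := by
    ext x
    simpa [MulAut.mul_apply, MulAut.conj_apply] using hrel x
  have hsemi : (QuotientGroup.mk α : Out H) * QuotientGroup.mk φ
      = (QuotientGroup.mk φ)⁻¹ * QuotientGroup.mk α := by
    rw [← QuotientGroup.mk_inv, ← QuotientGroup.mk_mul, ← QuotientGroup.mk_mul, heq,
      QuotientGroup.mk_mul]
    have hone : (QuotientGroup.mk (MulAut.conj k) : Out H) = 1 :=
      (QuotientGroup.eq_one_iff _).mpr ⟨k, rfl⟩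
    rw [hone, one_mul]
  exact isConj_iff.mpr ⟨QuotientGroup.mk α, by rw [hsemi]; group⟩

omit hH in
lemma exists_neg_of_isConj
    (hc : IsConj (QuotientGroup.mk φ : Out H) (QuotientGroup.mk φ : Out H)⁻¹) :
    ∃ ψ : MulAut (MappingTorus H φ), d ψ = -1 := by
  rw [isConj_iff] at hc
  obtain ⟨c, hc⟩ := hc
  obtain ⟨α, rfl⟩ := QuotientGroup.mk_surjective c
  have h2 : (QuotientGroup.mk α : Out H) * QuotientGroup.mk φ
      = (QuotientGroup.mk φ)⁻¹ * QuotientGroup.mk α := by rw [← hc]; group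
  have hc' : (QuotientGroup.mk (α * φ) : Out H) = QuotientGroup.mk (φ⁻¹ * α) := by
    rw [QuotientGroup.mk_mul, QuotientGroup.mk_mul, QuotientGroup.mk_inv, h2]
  rw [QuotientGroup.eq] at hc'
  obtain ⟨g, hg⟩ := hc'
  have hg' : φ⁻¹ * α = (α * φ) * MulAut.conj g := by
    rw [hg]; group
  have hrel0 : ∀ x : H, φ⁻¹ (α x) = α (φ (g * x * g⁻¹)) := by
    intro x
    have := congrArg (fun ρ : MulAut H => ρ x) hg'
    simpa [MulAut.mul_apply, MulAut.conj_apply] using this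
  set h' : H := (φ⁻¹ (α g))⁻¹ with hh'
  have hrel : ∀ z : H, α (φ z) = h' * φ⁻¹ (α z) * h'⁻¹ := by
    intro z
    have h0 := hrel0 (g⁻¹ * z * g)
    have h1 : g * (g⁻¹ * z * g) * g⁻¹ = z := by group
    rw [h1] at h0
    have h3 : α (g⁻¹ * z * g) = (α g)⁻¹ * α z * α g := by
      rw [map_mul, map_mul, map_inv]
    rw [h3, map_mul, map_mul, map_inv] at h0
    rw [← h0, hh']
    group
  set u : MappingTorus H φ := ι φ h' * (t φ)⁻¹ with hu
  have key1 : ∀ x : H, u * ι φ (α x) * u⁻¹ = ι φ (α (φ x)) := by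
    intro x
    have hstep : u * ι φ (α x) * u⁻¹
        = ι φ h' * ((t φ)⁻¹ * ι φ (α x) * t φ) * (ι φ h')⁻¹ := by
      rw [hu]; group
    rw [hstep, t_conj_inv, ← map_inv, ← map_mul, ← map_mul, ← hrel x]
  have keyn : ∀ n : ℤ, ∀ x : H, u ^ n * ι φ (α x) * (u ^ n)⁻¹ = ι φ (α ((φ ^ n) x)) := by
    intro n
    induction n using Int.induction_on with
    | zero => intro x; simp
    | succ m ih =>
      intro x
      have hφ : (φ ^ ((m : ℤ) + 1)) x = (φ ^ (m : ℤ)) (φ x) := by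
        rw [zpow_add_one]; rfl
      rw [hφ, ← ih (φ x), ← key1 x, zpow_add_one]
      group
    | pred m ih =>
      intro x
      have hφ : (φ ^ (-(m : ℤ) - 1)) x = (φ ^ (-m : ℤ)) (φ⁻¹ x) := by
        rw [zpow_sub_one]; rfl
      have key1' : u⁻¹ * ι φ (α x) * u = ι φ (α (φ⁻¹ x)) := by
        have hk := key1 (φ⁻¹ x)
        rw [MulAut.apply_inv_self] at hk
        rw [← hk]; group
      rw [hφ, ← ih (φ⁻¹ x), ← key1', zpow_sub_one]
      group
  have cond : ∀ m : Multiplicative ℤ,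
      ((SemidirectProduct.inl : H →* MappingTorus H φ).comp α.toMonoidHom).comp
          ((zpowersHom (MulAut H) φ) m).toMonoidHom
        = (MulAut.conj ((zpowersHom (MappingTorus H φ) u) m)).toMonoidHom.comp
            ((SemidirectProduct.inl : H →* MappingTorus H φ).comp α.toMonoidHom) := by
    intro m
    refine MonoidHom.ext fun x => ?_
    show ι φ (α ((φ ^ Multiplicative.toAdd m) x))
        = u ^ Multiplicative.toAdd m * ι φ (α x) * (u ^ Multiplicative.toAdd m)⁻¹
    exact (keyn _ x).symm
  set F : MappingTorus H φ →* MappingTorus H φ :=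
    SemidirectProduct.lift ((SemidirectProduct.inl : H →* MappingTorus H φ).comp α.toMonoidHom)
      (zpowersHom (MappingTorus H φ) u) cond with hF
  have hFinl : ∀ h : H, F (ι φ h) = ι φ (α h) := fun h => by
    rw [hF]; exact SemidirectProduct.lift_inl _ _ _ h
  have hFinr : ∀ m : Multiplicative ℤ, F (SemidirectProduct.inr m) = u ^ Multiplicative.toAdd m :=
    fun m => by rw [hF]; exact SemidirectProduct.lift_inr _ _ _ m
  have hFt : F (t φ) = u := by
    rw [hFinr (Multiplicative.ofAdd 1)]
    simp
  have hrhu : rightHom u = Multiplicative.ofAdd (-1 : ℤ) := by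
    have e1 : rightHom (ι φ h') = 1 := rightHom_inl h'
    have e2 : rightHom ((t φ)⁻¹) = (Multiplicative.ofAdd (1:ℤ))⁻¹ := by
      rw [map_inv]
      exact congrArg Inv.inv (rightHom_inr _)
    rw [hu, map_mul, e1, e2, one_mul]
    rfl
  have hrhF : ∀ x : MappingTorus H φ,
      rightHom (F x) = Multiplicative.ofAdd (-(Multiplicative.toAdd (rightHom x))) := by
    intro x
    conv_lhs => rw [← inl_left_mul_inr_right x]
    rw [map_mul, map_mul, hFinl, hFinr, rightHom_inl, one_mul, map_zpow, hrhu]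
    show (Multiplicative.ofAdd (-1 : ℤ)) ^ Multiplicative.toAdd x.right = _
    rw [← ofAdd_zsmul]
    congr 1
    show Multiplicative.toAdd x.right • (-1 : ℤ) = -Multiplicative.toAdd (rightHom x)
    rw [show rightHom x = x.right from rfl]
    ring_nf
  have hinj : Function.Injective F := by
    rw [injective_iff_map_eq_one]
    intro x hx
    have h1 : rightHom x = 1 := by
      have := hrhF x
      rw [hx, map_one] at this
      have h2 : -(Multiplicative.toAdd (rightHom x)) = 0 := by
        have := congrArg Multiplicative.toAdd this
        simpa using this.symm
      have h3 : Multiplicative.toAdd (rightHom x) = 0 := by omega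
      have := congrArg Multiplicative.ofAdd h3
      simpa using this
    have hx2 : x = ι φ x.left := eq_inl_of_rh h1
    rw [hx2, hFinl] at hx
    have : α x.left = 1 := by
      have : ι φ (α x.left) = ι φ 1 := by rw [hx, map_one]
      exact inl_injective this
    have hxl : x.left = 1 := by
      apply α.injective
      rw [this, map_one]
    rw [hx2, hxl, map_one]
  have hsurj : Function.Surjective F := by
    have hur : u ∈ F.range := ⟨t φ, hFt⟩
    have hι : ∀ h : H, ι φ h ∈ F.range := fun h =>
      ⟨ι φ (α⁻¹ h), by rw [hFinl]; congr 1; rw [MulAut.apply_inv_self]⟩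
    have ht : t φ ∈ F.range := by
      have htu : t φ = u⁻¹ * ι φ h' := by rw [hu]; group
      rw [htu]
      exact mul_mem (inv_mem hur) (hι h')
    intro y
    have : y ∈ F.range := by
      rw [← inl_left_mul_inr_right y]
      refine mul_mem (hι _) ?_
      rw [show y.right = Multiplicative.ofAdd (Multiplicative.toAdd y.right) from rfl,
        inr_eq_t_zpow]
      exact zpow_mem ht _
    exact this
  refine ⟨MulEquiv.ofBijective F ⟨hinj, hsurj⟩, ?_⟩
  show Multiplicative.toAdd (rightHom (MulEquiv.ofBijective F ⟨hinj, hsurj⟩ (t φ))) = -1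
  have : MulEquiv.ofBijective F ⟨hinj, hsurj⟩ (t φ) = F (t φ) := rfl
  rw [this, hFt, hrhu]
  rfl

end MT

theorem out0_subgroup_index (H : Type*) [Group H]
    (hZ : Subgroup.center H = ⊥)
    (hH : ∀ f : H →* Multiplicative ℤ, ¬ Function.Surjective f)
    (φ : MulAut H) :
    ∃ S : Subgroup (Out (MappingTorus H φ)),
      (∀ x : Out (MappingTorus H φ),
        x ∈ S ↔ ∃ ψ : MulAut (MappingTorus H φ),
          (QuotientGroup.mk ψ : Out (MappingTorus H φ)) = x ∧
          Subgroup.map ψ.toMonoidHom (MappingTorus.ι φ).range = (MappingTorus.ι φ).range ∧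
          ∃ g : H, ψ (MappingTorus.t φ) = MappingTorus.ι φ g * MappingTorus.t φ) ∧
      (IsConj (QuotientGroup.mk φ : Out H) (QuotientGroup.mk φ : Out H)⁻¹ → S.index = 2) ∧
      (¬ IsConj (QuotientGroup.mk φ : Out H) (QuotientGroup.mk φ : Out H)⁻¹ → S = ⊤) := by
  refine ⟨MT.S0 hH, fun x => MT.mem_S0_iff hH x, ?_, ?_⟩
  · intro hc
    obtain ⟨ψ, hψ⟩ := MT.exists_neg_of_isConj (φ := φ) hc
    rw [Subgroup.index_eq_two_iff]
    refine ⟨QuotientGroup.mk ψ, fun b => ?_⟩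
    rcases MT.dbar_pm hH b with h1 | h1
    · refine Or.inr ⟨h1, ?_⟩
      rw [MT.mem_S0, MT.dbar_mul hH, h1, MT.dbar_mk, hψ]
      norm_num
    · refine Or.inl ⟨?_, ?_⟩
      · rw [MT.mem_S0, MT.dbar_mul hH, h1, MT.dbar_mk, hψ]; norm_num
      · rw [MT.mem_S0, h1]; norm_num
  · intro hnc
    ext x
    simp only [Subgroup.mem_top, iff_true, MT.mem_S0]
    rcases MT.dbar_pm hH x with h1 | h1
    · exact h1
    · exfalso
      induction x using QuotientGroup.induction_on with
      | H ψ => exact hnc (MT.isConj_of_neg hH ψ (by rw [← MT.dbar_mk hH]; exact h1))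
end

section
/- Let H be a group with trivial center and admitting no surjective group homomorphism onto ℤ, and let φ be an automorphism of H. Let Out⁰(H_φ) denote the subgroup of Out(H_φ) consisting of elements admitting a representative ψ ∈ Aut(H_φ) with ψ(ι(H)) = ι(H) and ψ(t) ∈ ι(H)·t. Then Out⁰(H_φ) is isomorphic to the quotient C_{Out(H)}([φ]) / ⟨[φ]⟩ of the centralizer of [φ] in Out(H) by the cyclic subgroup generated by [φ] (which is normal in the centralizer, being central in it). Moreover, either Out⁰(H_φ) = Out(H_φ), or [φ] is conjugate to [φ]⁻¹ in Out(H) and Out⁰(H_φ) has index two in Out(H_φ). -/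
instance zpowersSubgroupOfCentralizerNormal (G : Type*) [Group G] (x : G) :
    ((Subgroup.zpowers x).subgroupOf (Subgroup.centralizer {x})).Normal := by
  constructor
  intro n hn g
  rw [Subgroup.mem_subgroupOf] at hn ⊢
  obtain ⟨k, hk⟩ := hn
  refine ⟨k, ?_⟩
  have hg : Commute x (g : G) := by
    have hmem := g.2
    rw [Subgroup.mem_centralizer_iff] at hmem
    exact hmem x (Set.mem_singleton x)
  have hc : Commute (x ^ k) (g : G) := hg.zpow_left k
  have hcoe : ((g * n * g⁻¹ : Subgroup.centralizer ({x} : Set G)) : G)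
      = (g : G) * (n : G) * (g : G)⁻¹ := rfl
  rw [hcoe, ← hk, ← hc.eq, mul_inv_cancel_right]

namespace MTAux

open SemidirectProduct Multiplicative

variable {H : Type*} [Group H] (φ : MulAut H)

/-- No nontrivial hom to `Multiplicative ℤ`. -/
theorem hom_eq_one (hH : ∀ f : H →* Multiplicative ℤ, ¬ Function.Surjective f)
    (f : H →* Multiplicative ℤ) (h : H) : f h = 1 := by
  by_contra hne
  let S : AddSubgroup ℤ :=
    { carrier := Set.range fun x => (f x).toAdd
      add_mem' := by rintro _ _ ⟨a, rfl⟩ ⟨b, rfl⟩; exact ⟨a * b, by simp⟩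
      zero_mem' := ⟨1, by simp⟩
      neg_mem' := by rintro _ ⟨a, rfl⟩; exact ⟨a⁻¹, by simp⟩ }
  obtain ⟨a, hS⟩ := Int.subgroup_cyclic S
  have hmem : ∀ x : H, ∃ k : ℤ, (f x).toAdd = k * a := by
    intro x
    have hx : (f x).toAdd ∈ S := ⟨x, rfl⟩
    rw [hS, AddSubgroup.mem_closure_singleton] at hx
    obtain ⟨k, hk⟩ := hx
    exact ⟨k, by rw [← hk]; simp [zsmul_eq_mul]⟩
  have ha : a ≠ 0 := by
    rintro rfl
    obtain ⟨k, hk⟩ := hmem h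
    apply hne
    have : (f h).toAdd = 0 := by simpa using hk
    have := congrArg Multiplicative.ofAdd this
    simpa using this
  have haS : a ∈ S := by
    rw [hS]; exact AddSubgroup.mem_closure_singleton.2 ⟨1, one_zsmul a⟩
  obtain ⟨h₀, hh₀⟩ := haS
  refine hH
    { toFun := fun x => ofAdd ((f x).toAdd / a)
      map_one' := by simp
      map_mul' := by
        intro x y
        obtain ⟨k, hk⟩ := hmem x
        obtain ⟨l, hl⟩ := hmem y
        have hxy : (f (x * y)).toAdd = (k + l) * a := by
          rw [map_mul, toAdd_mul, hk, hl]; ring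
        simp only [hxy, hk, hl]
        rw [Int.mul_ediv_cancel _ ha, Int.mul_ediv_cancel _ ha, Int.mul_ediv_cancel _ ha,
          ofAdd_add]
        } ?_
  intro n
  refine ⟨h₀ ^ n.toAdd, ?_⟩
  have : (f (h₀ ^ n.toAdd)).toAdd = n.toAdd * a := by
    rw [map_zpow, toAdd_zpow, show toAdd (f h₀) = a from hh₀, smul_eq_mul]
  simp only [MonoidHom.coe_mk, OneHom.coe_mk, this, Int.mul_ediv_cancel _ ha]
  simp


local notation "Γ" => MappingTorus H φ

variable (hH : ∀ f : H →* Multiplicative ℤ, ¬ Function.Surjective f)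

include hH

theorem right_psi_inl (ψ : MulAut Γ) (h : H) : (ψ (inl h)).right = 1 := by
  have := hom_eq_one hH ((rightHom.comp ψ.toMonoidHom).comp inl) h
  simpa using this

theorem psi_inl (ψ : MulAut Γ) (h : H) : ψ (inl h) = inl ((ψ (inl h)).left) := by
  ext
  · simp
  · simp [right_psi_inl φ hH ψ h]

/-- Restriction of an automorphism of the mapping torus to `H`. -/
def res (ψ : MulAut Γ) : MulAut H where
  toFun h := (ψ (inl h)).left
  invFun h := (ψ⁻¹ (inl h)).left
  left_inv h := by
    show (ψ⁻¹ (inl ((ψ (inl h)).left))).left = h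
    rw [← psi_inl φ hH ψ h]
    simp
  right_inv h := by
    show (ψ (inl ((ψ⁻¹ (inl h)).left))).left = h
    rw [← psi_inl φ hH ψ⁻¹ h]
    simp
  map_mul' a b := by
    show (ψ (inl (a * b))).left = (ψ (inl a)).left * (ψ (inl b)).left
    rw [map_mul, map_mul]
    simp [right_psi_inl φ hH ψ a]

theorem res_apply (ψ : MulAut Γ) (h : H) : res φ hH ψ h = (ψ (inl h)).left := rfl

theorem psi_inl_res (ψ : MulAut Γ) (h : H) : ψ (inl h) = inl (res φ hH ψ h) :=
  psi_inl φ hH ψ h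

theorem res_mul (ψ₁ ψ₂ : MulAut Γ) :
    res φ hH (ψ₁ * ψ₂) = res φ hH ψ₁ * res φ hH ψ₂ := by
  ext h
  rw [MulAut.mul_apply, res_apply, res_apply, MulAut.mul_apply, psi_inl_res φ hH ψ₂ h,
    res_apply]


/-- The degree of an automorphism of the mapping torus on the `ℤ`-factor. -/
def eInt (ψ : MulAut Γ) : ℤ := (ψ (MappingTorus.t φ)).right.toAdd

omit hH in
theorem eInt_one : eInt φ (1 : MulAut Γ) = 1 := rfl

theorem right_psi (ψ : MulAut Γ) (x : Γ) :
    (ψ x).right = ofAdd (x.right.toAdd * eInt φ ψ) := by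
  have hx : x = inl x.left * inr x.right := (inl_left_mul_inr_right x).symm
  have h2 : (inr x.right : Γ) = (MappingTorus.t φ) ^ x.right.toAdd := by
    rw [← map_zpow]
    congr 1
    apply Multiplicative.toAdd.injective
    simp
  conv_lhs => rw [hx, map_mul, mul_right, right_psi_inl φ hH ψ, one_mul, h2, map_zpow]
  apply Multiplicative.toAdd.injective
  rw [toAdd_ofAdd]
  show ((ψ (MappingTorus.t φ)) ^ x.right.toAdd).right.toAdd = _
  have : ((ψ (MappingTorus.t φ)) ^ x.right.toAdd).right
      = ((ψ (MappingTorus.t φ)).right) ^ x.right.toAdd := by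
    rw [← rightHom_eq_right]
    exact map_zpow rightHom _ _
  rw [this, toAdd_zpow, smul_eq_mul]
  rfl

theorem eInt_mul (ψ₁ ψ₂ : MulAut Γ) :
    eInt φ (ψ₁ * ψ₂) = eInt φ ψ₁ * eInt φ ψ₂ := by
  show (ψ₁ (ψ₂ (MappingTorus.t φ))).right.toAdd = _
  rw [right_psi φ hH ψ₁ (ψ₂ (MappingTorus.t φ))]
  rw [toAdd_ofAdd]
  show (ψ₂ (MappingTorus.t φ)).right.toAdd * eInt φ ψ₁ = _
  rw [mul_comm]
  rfl

/-- The degree map as a homomorphism to the multiplicative monoid `ℤ`. -/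
def eHom : MulAut Γ →* ℤ where
  toFun := eInt φ
  map_one' := eInt_one φ
  map_mul' := eInt_mul φ hH

/-- The degree map as a homomorphism to `ℤˣ`. -/
def EHom : MulAut Γ →* ℤˣ := (eHom φ hH).toHomUnits

theorem EHom_coe (ψ : MulAut Γ) : ((EHom φ hH ψ : ℤˣ) : ℤ) = eInt φ ψ := rfl

theorem mem_ker_EHom (ψ : MulAut Γ) : ψ ∈ (EHom φ hH).ker ↔ eInt φ ψ = 1 := by
  rw [MonoidHom.mem_ker, Units.ext_iff, EHom_coe]
  rfl

omit hH in
theorem eInt_conj (x : Γ) : eInt φ (MulAut.conj x) = 1 := by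
  show ((x * MappingTorus.t φ * x⁻¹).right).toAdd = 1
  simp only [mul_right, inv_right, toAdd_mul, toAdd_inv, right_inr, toAdd_ofAdd]
  omega

theorem EHom_conj (x : Γ) : EHom φ hH (MulAut.conj x) = 1 := by
  apply Units.ext
  rw [EHom_coe]
  exact eInt_conj φ x

/-- The degree map on the outer automorphism group. -/
def Ebar : Out Γ →* ℤˣ :=
  QuotientGroup.lift _ (EHom φ hH) (by rintro _ ⟨x, rfl⟩; exact EHom_conj φ hH x)

theorem Ebar_mk (ψ : MulAut Γ) :
    Ebar φ hH (QuotientGroup.mk ψ) = EHom φ hH ψ := rfl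


omit hH in
theorem psi_t (ψ : MulAut Γ) :
    ψ (MappingTorus.t φ) = inl ((ψ (MappingTorus.t φ)).left)
      * inr (ofAdd (eInt φ ψ)) := by
  conv_lhs => rw [← inl_left_mul_inr_right (ψ (MappingTorus.t φ))]
  rfl

/-- The master relation between `res ψ`, `φ` and conjugation by `(ψ t).left`. -/
theorem res_phi (ψ : MulAut Γ) (h : H) :
    res φ hH ψ (φ h) = (ψ (MappingTorus.t φ)).left *
      ((φ ^ eInt φ ψ) (res φ hH ψ h) * ((ψ (MappingTorus.t φ)).left)⁻¹) := by
  have key : (inl (φ h) : Γ) = MappingTorus.t φ * inl h * (MappingTorus.t φ)⁻¹ := by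
    have := inl_aut (φ := zpowersHom (MulAut H) φ) (ofAdd (1 : ℤ)) h
    simpa using this
  have h1 := congrArg ψ key
  rw [map_mul, map_mul, map_inv] at h1
  rw [psi_inl_res φ hH ψ (φ h), psi_inl_res φ hH ψ h] at h1
  have h2 := congrArg SemidirectProduct.left h1
  simp only [left_inl, mul_left, mul_right, inv_left, inv_right, right_inl, left_inr,
    right_inr, map_mul, map_inv, map_one, mul_one, one_mul] at h2
  rw [h2]
  simp only [MulAut.apply_inv_self, zpowersHom_apply, mul_assoc]
  rfl


omit hH in
theorem conj_injective (hZ : Subgroup.center H = ⊥) :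
    Function.Injective (MulAut.conj : H → MulAut H) := by
  intro a b hab
  have hc : b⁻¹ * a ∈ Subgroup.center H := by
    rw [Subgroup.mem_center_iff]
    intro k
    have := congrArg (fun e : MulAut H => e k) hab
    simp only [MulAut.conj_apply] at this
    -- a * k * a⁻¹ = b * k * b⁻¹
    calc k * (b⁻¹ * a) = b⁻¹ * (b * k * b⁻¹) * a := by group
    _ = b⁻¹ * (a * k * a⁻¹) * a := by rw [this]
    _ = (b⁻¹ * a) * k := by group
  rw [hZ, Subgroup.mem_bot] at hc
  have : b * (b⁻¹ * a) = b * 1 := by rw [hc]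
  simpa [mul_assoc] using this

theorem res_conj (x : Γ) (h : H) :
    res φ hH (MulAut.conj x) h = x.left * ((φ ^ x.right.toAdd) h * x.left⁻¹) := by
  show (x * inl h * x⁻¹).left = _
  simp only [mul_left, mul_right, inv_left, inv_right, left_inl, right_inl, map_mul, mul_one,
    MulAut.apply_inv_self, zpowersHom_apply, mul_assoc, toAdd_one, toAdd_inv, zpow_zero,
    MulAut.one_apply, zpow_neg]

theorem res_determines (hZ : Subgroup.center H = ⊥) (ψ₁ ψ₂ : MulAut Γ)
    (he₁ : eInt φ ψ₁ = 1) (he₂ : eInt φ ψ₂ = 1)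
    (hres : res φ hH ψ₁ = res φ hH ψ₂) : ψ₁ = ψ₂ := by
  have hconj : MulAut.conj ((ψ₁ (MappingTorus.t φ)).left)
      = MulAut.conj ((ψ₂ (MappingTorus.t φ)).left) := by
    ext m
    have e1 := res_phi φ hH ψ₁ ((res φ hH ψ₁)⁻¹ (φ⁻¹ m))
    have e2 := res_phi φ hH ψ₂ ((res φ hH ψ₂)⁻¹ (φ⁻¹ m))
    rw [he₁] at e1
    rw [he₂] at e2
    rw [hres] at e1
    simp only [zpow_one, MulAut.apply_inv_self] at e1 e2
    rw [MulAut.conj_apply, MulAut.conj_apply, mul_assoc, mul_assoc, ← e1, ← e2]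
  have hL : (ψ₁ (MappingTorus.t φ)).left = (ψ₂ (MappingTorus.t φ)).left :=
    conj_injective hZ hconj
  have ht : ψ₁ (MappingTorus.t φ) = ψ₂ (MappingTorus.t φ) := by
    rw [psi_t φ ψ₁, psi_t φ ψ₂, he₁, he₂, hL]
  apply MulEquiv.toMonoidHom_injective
  apply SemidirectProduct.hom_ext
  · refine MonoidHom.ext fun h => ?_
    simp only [MonoidHom.comp_apply, MulEquiv.coe_toMonoidHom]
    rw [psi_inl_res φ hH ψ₁ h, psi_inl_res φ hH ψ₂ h, hres]
  · apply MonoidHom.ext_mint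
    simpa using ht


section mkAut

omit hH

variable (α : MulAut H) (g : H) (rel : ∀ h : H, α (φ h) = g * (φ (α h) * g⁻¹))

theorem t_inl_t (x : H) :
    MappingTorus.t φ * inl x * (MappingTorus.t φ)⁻¹ = inl (φ x) := by
  have := inl_aut (φ := zpowersHom (MulAut H) φ) (ofAdd (1 : ℤ)) x
  simp only [zpowersHom_apply, toAdd_ofAdd, zpow_one, map_inv] at this
  exact this.symm

include rel in
theorem u_conj (h : H) :
    (inl g * MappingTorus.t φ) * inl (α h) * (inl g * MappingTorus.t φ)⁻¹
      = inl (α (φ h)) := by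
  have : (inl g * MappingTorus.t φ) * inl (α h) * (inl g * MappingTorus.t φ)⁻¹
      = inl g * (MappingTorus.t φ * inl (α h) * (MappingTorus.t φ)⁻¹) * (inl g)⁻¹ := by
    group
  rw [this, t_inl_t φ, ← map_inv, ← map_mul, ← map_mul, rel h, mul_assoc]

theorem u_conj_zpow (u : Γ) (hu : ∀ h : H, u * inl (α h) * u⁻¹ = inl (α (φ h))) :
    ∀ (n : ℤ) (h : H), u ^ n * inl (α h) * (u ^ n)⁻¹ = inl (α ((φ ^ n) h)) := by
  have hu' : ∀ h : H, u⁻¹ * inl (α h) * u = inl (α (φ⁻¹ h)) := by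
    intro h
    have h2 := hu (φ⁻¹ h)
    rw [MulAut.apply_inv_self] at h2
    rw [← h2]; group
  intro n
  induction n using Int.induction_on with
  | zero => intro h; simp
  | succ k ih =>
    intro h
    have h1 : u ^ ((k : ℤ) + 1) = u ^ (k : ℤ) * u := zpow_add_one u k
    have h2 : u ^ (k : ℤ) * u * inl (α h) * (u ^ (k : ℤ) * u)⁻¹
        = u ^ (k : ℤ) * (u * inl (α h) * u⁻¹) * (u ^ (k : ℤ))⁻¹ := by group
    have h3 : (φ ^ ((k : ℤ) + 1)) h = (φ ^ (k : ℤ)) (φ h) := by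
      rw [zpow_add_one]
      rfl
    rw [h1, h2, hu, ih (φ h), h3]
  | pred k ih =>
    intro h
    have h1 : u ^ (-(k : ℤ) - 1) = u ^ (-(k : ℤ)) * u⁻¹ := by
      rw [zpow_sub_one]
    have h2 : u ^ (-(k : ℤ)) * u⁻¹ * inl (α h) * (u ^ (-(k : ℤ)) * u⁻¹)⁻¹
        = u ^ (-(k : ℤ)) * (u⁻¹ * inl (α h) * u) * (u ^ (-(k : ℤ)))⁻¹ := by group
    have h3 : (φ ^ (-(k : ℤ) - 1)) h = (φ ^ (-(k : ℤ))) (φ⁻¹ h) := by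
      rw [zpow_sub_one]
      rfl
    rw [h1, h2, hu', ih (φ⁻¹ h), h3]

include rel in
theorem lift_cond : ∀ z : Multiplicative ℤ,
    (inl.comp α.toMonoidHom).comp ((zpowersHom (MulAut H) φ z) : MulAut H).toMonoidHom
      = (MulAut.conj (zpowersHom Γ (inl g * MappingTorus.t φ) z)).toMonoidHom.comp
        (inl.comp α.toMonoidHom) := by
  intro z
  refine MonoidHom.ext fun h => ?_
  simp only [MonoidHom.comp_apply, MulEquiv.coe_toMonoidHom, MonoidHom.coe_comp,
    Function.comp_apply, zpowersHom_apply, MulAut.conj_apply]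
  exact (u_conj_zpow φ α (inl g * MappingTorus.t φ)
    (u_conj φ α g rel) z.toAdd h).symm

/-- The lifted endomorphism of the mapping torus. -/
def mkHom : Γ →* Γ :=
  SemidirectProduct.lift (inl.comp α.toMonoidHom)
    (zpowersHom Γ (inl g * MappingTorus.t φ)) (lift_cond φ α g rel)

theorem mkHom_inl (h : H) : mkHom φ α g rel (inl h) = inl (α h) := by
  simp [mkHom]

theorem mkHom_t : mkHom φ α g rel (MappingTorus.t φ) = inl g * MappingTorus.t φ := by
  show mkHom φ α g rel (inr (ofAdd 1)) = _
  simp [mkHom]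

include rel in
theorem rel_inv : ∀ h : H, α⁻¹ (φ h) = α⁻¹ g⁻¹ * (φ (α⁻¹ h) * (α⁻¹ g⁻¹)⁻¹) := by
  intro k
  have h1 := rel (α⁻¹ k)
  rw [MulAut.apply_inv_self] at h1
  have h2 : φ (α⁻¹ k) = α⁻¹ (g * (φ k * g⁻¹)) := by
    rw [← h1, MulAut.inv_apply_self]
  rw [h2]
  simp only [map_mul, map_inv]
  group

/-- The lifted automorphism of the mapping torus. -/
def mkAut : MulAut Γ :=
  MonoidHom.toMulEquiv (mkHom φ α g rel)
    (mkHom φ α⁻¹ (α⁻¹ g⁻¹) (rel_inv φ α g rel))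
    (by
      apply SemidirectProduct.hom_ext
      · refine MonoidHom.ext fun h => ?_
        simp [mkHom_inl]
      · apply MonoidHom.ext_mint
        show mkHom φ α⁻¹ (α⁻¹ g⁻¹) (rel_inv φ α g rel) (mkHom φ α g rel (inr (ofAdd 1))) = inr (ofAdd 1)
        have h1 : mkHom φ α g rel (inr (ofAdd 1)) = inl g * MappingTorus.t φ :=
          mkHom_t φ α g rel
        rw [h1, map_mul, mkHom_inl, mkHom_t]
        rw [← mul_assoc, ← map_mul]
        simp)
    (by
      apply SemidirectProduct.hom_ext
      · refine MonoidHom.ext fun h => ?_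
        simp [mkHom_inl]
      · apply MonoidHom.ext_mint
        show mkHom φ α g rel (mkHom φ α⁻¹ (α⁻¹ g⁻¹) (rel_inv φ α g rel) (inr (ofAdd 1))) = inr (ofAdd 1)
        have h1 : mkHom φ α⁻¹ (α⁻¹ g⁻¹) (rel_inv φ α g rel) (inr (ofAdd 1))
            = inl (α⁻¹ g⁻¹) * MappingTorus.t φ := mkHom_t φ α⁻¹ (α⁻¹ g⁻¹) (rel_inv φ α g rel)
        rw [h1, map_mul, mkHom_inl, mkHom_t]
        rw [← mul_assoc, ← map_mul]
        simp)

theorem mkAut_inl (h : H) : mkAut φ α g rel (inl h) = inl (α h) :=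
  mkHom_inl φ α g rel h

theorem mkAut_t : mkAut φ α g rel (MappingTorus.t φ) = inl g * MappingTorus.t φ :=
  mkHom_t φ α g rel

theorem eInt_mkAut : eInt φ (mkAut φ α g rel) = 1 := by
  show ((mkAut φ α g rel (MappingTorus.t φ)).right).toAdd = 1
  rw [mkAut_t]
  simp

end mkAut

theorem res_mkAut (α : MulAut H) (g : H)
    (rel : ∀ h : H, α (φ h) = g * (φ (α h) * g⁻¹)) :
    res φ hH (mkAut φ α g rel) = α := by
  ext h
  rw [res_apply, mkAut_inl]
  simp


omit hH in
theorem mk_conj_eq_one (x : H) : (QuotientGroup.mk (MulAut.conj x) : Out H) = 1 :=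
  (QuotientGroup.eq_one_iff _).2 ⟨x, rfl⟩

theorem res_comm (ψ : MulAut Γ) (he : eInt φ ψ = 1) :
    (QuotientGroup.mk φ : Out H) * QuotientGroup.mk (res φ hH ψ)
      = QuotientGroup.mk (res φ hH ψ) * QuotientGroup.mk φ := by
  have hrel : res φ hH ψ * φ
      = MulAut.conj ((ψ (MappingTorus.t φ)).left) * φ * res φ hH ψ := by
    ext h
    have h0 := res_phi φ hH ψ h
    rw [he, zpow_one] at h0
    simpa [MulAut.mul_apply, MulAut.conj_apply, mul_assoc] using h0
  have h1 := congrArg (QuotientGroup.mk (s := (MulAut.conj : H →* MulAut H).range)) hrel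
  rw [QuotientGroup.mk_mul, QuotientGroup.mk_mul, QuotientGroup.mk_mul,
    mk_conj_eq_one, one_mul] at h1
  exact h1.symm

theorem res_mem_centralizer (ψ : MulAut Γ) (he : eInt φ ψ = 1) :
    (QuotientGroup.mk (res φ hH ψ) : Out H)
      ∈ Subgroup.centralizer ({(QuotientGroup.mk φ : Out H)} : Set (Out H)) := by
  rw [Subgroup.mem_centralizer_iff]
  rintro y hy
  rw [Set.mem_singleton_iff] at hy
  subst hy
  exact res_comm φ hH ψ he

/-- `theta` with values in the centralizer. -/
def thetaC : (EHom φ hH).ker →*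
    Subgroup.centralizer ({(QuotientGroup.mk φ : Out H)} : Set (Out H)) :=
  MonoidHom.mk' (fun ψ => ⟨QuotientGroup.mk (res φ hH ψ.1),
      res_mem_centralizer φ hH ψ.1 ((mem_ker_EHom φ hH ψ.1).1 ψ.2)⟩)
    (by
      intro ψ₁ ψ₂
      apply Subtype.ext
      show (QuotientGroup.mk (res φ hH (ψ₁.1 * ψ₂.1)) : Out H) = _
      rw [res_mul φ hH, QuotientGroup.mk_mul]
      rfl)

/-- The map from `ker E` to the quotient of the centralizer. -/
def theta : (EHom φ hH).ker →*
    (Subgroup.centralizer ({(QuotientGroup.mk φ : Out H)} : Set (Out H)) ⧸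
      (Subgroup.zpowers (QuotientGroup.mk φ : Out H)).subgroupOf
        (Subgroup.centralizer ({(QuotientGroup.mk φ : Out H)} : Set (Out H)))) :=
  (QuotientGroup.mk' _).comp (thetaC φ hH)

/-- The projection from `ker E` onto `ker Ebar`. -/
def pHom : (EHom φ hH).ker →* (Ebar φ hH).ker :=
  MonoidHom.mk' (fun ψ => ⟨QuotientGroup.mk ψ.1, by
      rw [MonoidHom.mem_ker, Ebar_mk φ hH]
      exact ψ.2⟩)
    (by
      intro a b
      apply Subtype.ext
      rfl)

theorem pHom_surjective : Function.Surjective (pHom φ hH) := by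
  rintro ⟨x, hx⟩
  obtain ⟨ψ₀, rfl⟩ := QuotientGroup.mk_surjective x
  rw [MonoidHom.mem_ker, Ebar_mk φ hH] at hx
  exact ⟨⟨ψ₀, hx⟩, Subtype.ext rfl⟩

theorem theta_surjective : Function.Surjective (theta φ hH) := by
  intro c
  obtain ⟨y, rfl⟩ := QuotientGroup.mk_surjective c
  obtain ⟨α, hα⟩ := QuotientGroup.mk_surjective (y : Out H)
  have hy := y.2
  rw [Subgroup.mem_centralizer_iff] at hy
  have hcomm : (QuotientGroup.mk φ : Out H) * QuotientGroup.mk α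
      = QuotientGroup.mk α * QuotientGroup.mk φ := by
    rw [hα]; exact hy _ (Set.mem_singleton _)
  have h1 : (QuotientGroup.mk (α * φ * α⁻¹ * φ⁻¹) : Out H) = 1 := by
    rw [QuotientGroup.mk_mul, QuotientGroup.mk_mul, QuotientGroup.mk_mul,
      QuotientGroup.mk_inv, QuotientGroup.mk_inv, ← hcomm]
    group
  obtain ⟨g₀, hg₀⟩ := (QuotientGroup.eq_one_iff _).1 h1
  have rel : ∀ h : H, α (φ h) = g₀ * (φ (α h) * g₀⁻¹) := by
    intro h
    have h2 := congrArg (fun e : MulAut H => e (φ (α h))) hg₀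
    simp only [MulAut.conj_apply, MulAut.mul_apply, MulAut.inv_apply_self] at h2
    rw [← h2]
    simp [mul_assoc]
  refine ⟨⟨mkAut φ α g₀ rel, (mem_ker_EHom φ hH _).2 (eInt_mkAut φ α g₀ rel)⟩, ?_⟩
  have hTC : thetaC φ hH ⟨mkAut φ α g₀ rel, (mem_ker_EHom φ hH _).2 (eInt_mkAut φ α g₀ rel)⟩
      = y := by
    apply Subtype.ext
    show (QuotientGroup.mk (res φ hH (mkAut φ α g₀ rel)) : Out H) = (y : Out H)
    rw [res_mkAut φ hH α g₀ rel, hα]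
  show (QuotientGroup.mk' _) (thetaC φ hH _) = _
  rw [hTC]
  rfl

theorem ker_pHom_eq_ker_theta (hZ : Subgroup.center H = ⊥) :
    (pHom φ hH).ker = (theta φ hH).ker := by
  ext ψ
  rw [MonoidHom.mem_ker, MonoidHom.mem_ker]
  constructor
  · intro hp
    have h1 : (QuotientGroup.mk ψ.1 : Out Γ) = 1 := congrArg Subtype.val hp
    obtain ⟨x, hx⟩ := (QuotientGroup.eq_one_iff _).1 h1
    have hres : res φ hH ψ.1 = MulAut.conj x.left * φ ^ x.right.toAdd := by
      ext h
      rw [← hx, res_conj φ hH x h]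
      simp [MulAut.mul_apply, MulAut.conj_apply, mul_assoc]
    show (QuotientGroup.mk' _) (thetaC φ hH ψ) = 1
    rw [QuotientGroup.mk'_apply, QuotientGroup.eq_one_iff]
    rw [Subgroup.mem_subgroupOf]
    show (QuotientGroup.mk (res φ hH ψ.1) : Out H) ∈ Subgroup.zpowers _
    rw [hres, QuotientGroup.mk_mul, mk_conj_eq_one, one_mul]
    exact Subgroup.mem_zpowers_iff.2 ⟨x.right.toAdd, (QuotientGroup.mk_zpow _ φ _).symm⟩
  · intro hθ
    have hψe : eInt φ ψ.1 = 1 := (mem_ker_EHom φ hH ψ.1).1 ψ.2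
    have h1 : thetaC φ hH ψ ∈ (Subgroup.zpowers (QuotientGroup.mk φ : Out H)).subgroupOf
        (Subgroup.centralizer ({(QuotientGroup.mk φ : Out H)} : Set (Out H))) := by
      rw [← QuotientGroup.eq_one_iff]
      exact hθ
    rw [Subgroup.mem_subgroupOf] at h1
    obtain ⟨n, hn⟩ := h1
    have h2 : (QuotientGroup.mk (res φ hH ψ.1 * (φ ^ n)⁻¹) : Out H) = 1 := by
      rw [QuotientGroup.mk_mul, QuotientGroup.mk_inv, QuotientGroup.mk_zpow]
      have : ((QuotientGroup.mk φ : Out H)) ^ n = QuotientGroup.mk (res φ hH ψ.1) := hn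
      rw [← this]
      group
    obtain ⟨h₀, hh₀⟩ := (QuotientGroup.eq_one_iff _).1 h2
    have hres : res φ hH (MulAut.conj (⟨h₀, ofAdd n⟩ : Γ)) = res φ hH ψ.1 := by
      ext h
      rw [res_conj φ hH]
      show h₀ * ((φ ^ (ofAdd n).toAdd) h * h₀⁻¹) = res φ hH ψ.1 h
      rw [toAdd_ofAdd]
      have h3 := congrArg (fun e : MulAut H => e ((φ ^ n) h)) hh₀
      simp only [MulAut.conj_apply, MulAut.mul_apply] at h3
      rw [show ((φ ^ n)⁻¹ : MulAut H) ((φ ^ n) h) = h by simp] at h3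
      rw [← h3]
      simp [mul_assoc]
    have := res_determines φ hH hZ (MulAut.conj (⟨h₀, ofAdd n⟩ : Γ)) ψ.1
      (eInt_conj φ _) hψe hres
    apply Subtype.ext
    show (QuotientGroup.mk ψ.1 : Out Γ) = 1
    rw [QuotientGroup.eq_one_iff]
    exact ⟨⟨h₀, ofAdd n⟩, this⟩

end MTAux

theorem out0_iso_centralizer_quotient (H : Type*) [Group H]
    (hZ : Subgroup.center H = ⊥)
    (hH : ∀ f : H →* Multiplicative ℤ, ¬ Function.Surjective f)
    (φ : MulAut H) :
    ∃ S : Subgroup (Out (MappingTorus H φ)),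
      (∀ x : Out (MappingTorus H φ),
        x ∈ S ↔ ∃ ψ : MulAut (MappingTorus H φ),
          (QuotientGroup.mk ψ : Out (MappingTorus H φ)) = x ∧
          Subgroup.map ψ.toMonoidHom (MappingTorus.ι φ).range = (MappingTorus.ι φ).range ∧
          ∃ g : H, ψ (MappingTorus.t φ) = MappingTorus.ι φ g * MappingTorus.t φ) ∧
      Nonempty (S ≃*
        Subgroup.centralizer ({(QuotientGroup.mk φ : Out H)} : Set (Out H)) ⧸
          (Subgroup.zpowers (QuotientGroup.mk φ : Out H)).subgroupOf
            (Subgroup.centralizer ({(QuotientGroup.mk φ : Out H)} : Set (Out H)))) ∧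
      (S = ⊤ ∨
        (IsConj (QuotientGroup.mk φ : Out H) (QuotientGroup.mk φ : Out H)⁻¹ ∧ S.index = 2)) := by
  classical
  refine ⟨(MTAux.Ebar φ hH).ker, ?_, ?_, ?_⟩
  · intro x
    constructor
    · intro hx
      obtain ⟨ψ₀, rfl⟩ := QuotientGroup.mk_surjective x
      rw [MonoidHom.mem_ker, MTAux.Ebar_mk φ hH] at hx
      have he : MTAux.eInt φ ψ₀ = 1 := (MTAux.mem_ker_EHom φ hH ψ₀).1 hx
      refine ⟨ψ₀, rfl, ?_, (ψ₀ (MappingTorus.t φ)).left, ?_⟩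
      · apply le_antisymm
        · rintro y hy
          obtain ⟨z, hz, rfl⟩ := Subgroup.mem_map.1 hy
          obtain ⟨h, rfl⟩ := MonoidHom.mem_range.1 hz
          exact MonoidHom.mem_range.2
            ⟨(ψ₀ (MappingTorus.ι φ h)).left, (MTAux.psi_inl φ hH ψ₀ h).symm⟩
        · rintro y hy
          obtain ⟨h, rfl⟩ := MonoidHom.mem_range.1 hy
          refine Subgroup.mem_map.2 ⟨ψ₀⁻¹ (MappingTorus.ι φ h),
            MonoidHom.mem_range.2
              ⟨(ψ₀⁻¹ (MappingTorus.ι φ h)).left, (MTAux.psi_inl φ hH ψ₀⁻¹ h).symm⟩, ?_⟩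
          show ψ₀ (ψ₀⁻¹ _) = _
          simp
      · have h0 := MTAux.psi_t φ ψ₀
        rw [he] at h0
        exact h0
    · rintro ⟨ψ, rfl, -, g, hg⟩
      have he : MTAux.eInt φ ψ = 1 := by
        show ((ψ (MappingTorus.t φ)).right).toAdd = 1
        rw [hg]
        simp
      exact MonoidHom.mem_ker.2 (by
        rw [MTAux.Ebar_mk φ hH]
        exact MonoidHom.mem_ker.1 ((MTAux.mem_ker_EHom φ hH ψ).2 he))
  · refine ⟨?_⟩
    have e1 := QuotientGroup.quotientKerEquivOfSurjective _ (MTAux.pHom_surjective φ hH)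
    have e2 := QuotientGroup.quotientKerEquivOfSurjective _ (MTAux.theta_surjective φ hH)
    exact e1.symm.trans ((QuotientGroup.quotientMulEquivOfEq
      (MTAux.ker_pHom_eq_ker_theta φ hH hZ)).trans e2)
  · by_cases hall : ∀ ψ : MulAut (MappingTorus H φ), MTAux.eInt φ ψ = 1
    · left
      rw [Subgroup.eq_top_iff']
      intro x
      obtain ⟨ψ, rfl⟩ := QuotientGroup.mk_surjective x
      exact MonoidHom.mem_ker.2 (by
        rw [MTAux.Ebar_mk φ hH]
        exact MonoidHom.mem_ker.1 ((MTAux.mem_ker_EHom φ hH ψ).2 (hall ψ)))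
    · right
      push_neg at hall
      obtain ⟨ψ₀, hψ₀⟩ := hall
      have he : MTAux.eInt φ ψ₀ = -1 := by
        rcases Int.units_eq_one_or (MTAux.EHom φ hH ψ₀) with h | h
        · exact absurd (by rw [← MTAux.EHom_coe φ hH, h]; rfl) hψ₀
        · rw [← MTAux.EHom_coe φ hH, h]; rfl
      constructor
      · have key : MTAux.res φ hH ψ₀ * φ
            = MulAut.conj ((ψ₀ (MappingTorus.t φ)).left) * φ⁻¹ * MTAux.res φ hH ψ₀ := by
          ext h
          have h0 := MTAux.res_phi φ hH ψ₀ h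
          rw [he, zpow_neg_one] at h0
          simpa [MulAut.mul_apply, MulAut.conj_apply, mul_assoc] using h0
        have h2 := congrArg
          (QuotientGroup.mk (s := (MulAut.conj : H →* MulAut H).range)) key
        rw [QuotientGroup.mk_mul, QuotientGroup.mk_mul, QuotientGroup.mk_mul,
          MTAux.mk_conj_eq_one, one_mul, QuotientGroup.mk_inv] at h2
        rw [isConj_iff]
        refine ⟨QuotientGroup.mk (MTAux.res φ hH ψ₀), ?_⟩
        rw [h2]
        simp [mul_assoc]
      · have hsurj : Function.Surjective (MTAux.Ebar φ hH) := by
          intro u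
          rcases Int.units_eq_one_or u with rfl | rfl
          · exact ⟨1, map_one _⟩
          · refine ⟨QuotientGroup.mk ψ₀, ?_⟩
            apply Units.ext
            show ((MTAux.EHom φ hH ψ₀ : ℤˣ) : ℤ) = ((-1 : ℤˣ) : ℤ)
            rw [MTAux.EHom_coe φ hH, he]
            simp
        rw [Subgroup.index_ker, MonoidHom.range_eq_top.2 hsurj]
        rw [Nat.card_congr Subgroup.topEquiv.toEquiv, Nat.card_eq_fintype_card]
        rfl
end

section
/- Let H be a group with trivial center and admitting no surjective group homomorphism onto ℤ, and let φ be an automorphism of H. Then there exists a group homomorphism η from the centralizer C_{Out(H)}([φ]) of [φ] in Out(H) to Out(H_φ) such that: the kernel of η is the cyclic subgroup generated by [φ]; every element in the image of η has a representative ψ ∈ Aut(H_φ) with ψ(ι(H)) = ι(H) and ψ(t) ∈ ι(H)·t; and conversely every element of Out(H_φ) admitting such a representative lies in the image of η. -/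
section Helpers

open SemidirectProduct MappingTorus

variable {H : Type*} [Group H] (φ : MulAut H)

/-- The defining condition: `α ∘ φ = conj g ∘ φ ∘ α`. -/
def CondG (α : MulAut H) (g : H) : Prop := ∀ x, α (φ x) = g * φ (α x) * g⁻¹

lemma t_mul_inl (h : H) :
    t φ * ι φ h * (t φ)⁻¹ = ι φ (φ h) := by
  have := SemidirectProduct.inl_aut (φ := zpowersHom (MulAut H) φ)
    (Multiplicative.ofAdd (1 : ℤ)) h
  simpa using this.symm

lemma key1 {α : MulAut H} {g : H} (hg : CondG φ α g) (x : H) :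
    (ι φ g * t φ) * ι φ (α x) * (ι φ g * t φ)⁻¹ = ι φ (α (φ x)) := by
  rw [mul_inv_rev]
  have h1 : t φ * ι φ (α x) * (t φ)⁻¹ = ι φ (φ (α x)) := t_mul_inl φ (α x)
  calc ι φ g * t φ * ι φ (α x) * ((t φ)⁻¹ * (ι φ g)⁻¹)
      = ι φ g * (t φ * ι φ (α x) * (t φ)⁻¹) * (ι φ g)⁻¹ := by group
    _ = ι φ g * ι φ (φ (α x)) * (ι φ g)⁻¹ := by rw [h1]
    _ = ι φ (g * φ (α x) * g⁻¹) := by simp [map_mul, map_inv, mul_assoc]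
    _ = ι φ (α (φ x)) := by rw [← hg x]

lemma key1' {α : MulAut H} {g : H} (hg : CondG φ α g) (x : H) :
    (ι φ g * t φ)⁻¹ * ι φ (α x) * (ι φ g * t φ) = ι φ (α (φ⁻¹ x)) := by
  have h := key1 φ hg (φ⁻¹ x)
  rw [MulAut.apply_inv_self] at h
  rw [← h]
  group

lemma keyn {α : MulAut H} {g : H} (hg : CondG φ α g) (n : ℤ) (x : H) :
    (ι φ g * t φ) ^ n * ι φ (α x) * ((ι φ g * t φ) ^ n)⁻¹ = ι φ (α ((φ ^ n) x)) := by
  set u := ι φ g * t φ with hu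
  induction n using Int.induction_on generalizing x with
  | zero => simp
  | succ k ih =>
      have hexp : u ^ ((k : ℤ) + 1) = u ^ (k : ℤ) * u := zpow_add_one u k
      have harg : (φ ^ ((k:ℤ) + 1)) x = (φ ^ (k:ℤ)) (φ x) := by rw [zpow_add_one]; rfl
      rw [hexp, harg]
      calc u ^ (k:ℤ) * u * ι φ (α x) * (u ^ (k:ℤ) * u)⁻¹
          = u ^ (k:ℤ) * (u * ι φ (α x) * u⁻¹) * (u ^ (k:ℤ))⁻¹ := by group
        _ = u ^ (k:ℤ) * ι φ (α (φ x)) * (u ^ (k:ℤ))⁻¹ := by rw [key1 φ hg]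
        _ = ι φ (α ((φ ^ (k:ℤ)) (φ x))) := ih (φ x)
  | pred k ih =>
      have hexp : u ^ (-(k : ℤ) - 1) = u ^ (-(k : ℤ)) * u⁻¹ := zpow_sub_one u (-k)
      have harg : (φ ^ (-(k:ℤ) - 1)) x = (φ ^ (-(k:ℤ))) (φ⁻¹ x) := by rw [zpow_sub_one]; rfl
      rw [hexp, harg]
      calc u ^ (-(k:ℤ)) * u⁻¹ * ι φ (α x) * (u ^ (-(k:ℤ)) * u⁻¹)⁻¹
          = u ^ (-(k:ℤ)) * (u⁻¹ * ι φ (α x) * u) * (u ^ (-(k:ℤ)))⁻¹ := by group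
        _ = u ^ (-(k:ℤ)) * ι φ (α (φ⁻¹ x)) * (u ^ (-(k:ℤ)))⁻¹ := by rw [key1' φ hg]
        _ = ι φ (α ((φ ^ (-(k:ℤ))) (φ⁻¹ x))) := ih (φ⁻¹ x)

/-- The endomorphism of the mapping torus induced by `α` and `g`. -/
def psiHom (α : MulAut H) (g : H) (hg : CondG φ α g) :
    MappingTorus H φ →* MappingTorus H φ :=
  SemidirectProduct.lift ((ι φ).comp α.toMonoidHom)
    (zpowersHom _ (ι φ g * t φ)) (by
      intro z
      refine MonoidHom.ext fun x => ?_
      show ι φ (α ((φ ^ z.toAdd) x)) =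
        MulAut.conj ((ι φ g * t φ) ^ z.toAdd) (ι φ (α x))
      rw [MulAut.conj_apply]
      exact (keyn φ hg z.toAdd x).symm)

@[simp] lemma psiHom_inl (α : MulAut H) (g : H) (hg : CondG φ α g) (h : H) :
    psiHom φ α g hg (ι φ h) = ι φ (α h) := by
  simp [psiHom]

@[simp] lemma psiHom_t (α : MulAut H) (g : H) (hg : CondG φ α g) :
    psiHom φ α g hg (t φ) = ι φ g * t φ := by
  simp [psiHom]

lemma mt_hom_ext {K : Type*} [Group K] {f f' : MappingTorus H φ →* K}
    (h1 : ∀ h, f (ι φ h) = f' (ι φ h)) (h2 : f (t φ) = f' (t φ)) : f = f' :=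
  SemidirectProduct.hom_ext (MonoidHom.ext h1) (MonoidHom.ext_mint h2)

lemma condG_inv {α : MulAut H} {g : H} (hg : CondG φ α g) :
    CondG φ α⁻¹ (α⁻¹ (g⁻¹)) := by
  intro x
  apply α.injective
  have h1 := hg (α⁻¹ x)
  simp only [map_mul, map_inv, MulAut.apply_inv_self] at *
  rw [h1]
  group

/-- The automorphism of the mapping torus induced by `α` and `g`. -/
def psiAut (α : MulAut H) (g : H) (hg : CondG φ α g) : MulAut (MappingTorus H φ) :=
  MonoidHom.toMulEquiv (psiHom φ α g hg) (psiHom φ α⁻¹ (α⁻¹ (g⁻¹)) (condG_inv φ hg))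
    (by
      apply mt_hom_ext φ
      · intro h
        simp [MulAut.inv_apply_self]
      · rw [MonoidHom.comp_apply, psiHom_t, map_mul, psiHom_inl, psiHom_t,
          MonoidHom.id_apply, ← mul_assoc, ← map_mul]
        simp)
    (by
      apply mt_hom_ext φ
      · intro h
        simp [MulAut.apply_inv_self]
      · rw [MonoidHom.comp_apply, psiHom_t, map_mul, psiHom_inl, psiHom_t,
          MonoidHom.id_apply, ← mul_assoc, ← map_mul]
        simp [MulAut.apply_inv_self])

@[simp] lemma psiAut_inl (α : MulAut H) (g : H) (hg : CondG φ α g) (h : H) :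
    psiAut φ α g hg (ι φ h) = ι φ (α h) := psiHom_inl φ α g hg h

@[simp] lemma psiAut_t (α : MulAut H) (g : H) (hg : CondG φ α g) :
    psiAut φ α g hg (t φ) = ι φ g * t φ := psiHom_t φ α g hg

/-- Uniqueness of automorphisms of the mapping torus on generators. -/
lemma psi_ext {ψ ψ' : MulAut (MappingTorus H φ)}
    (h1 : ∀ h, ψ (ι φ h) = ψ' (ι φ h)) (h2 : ψ (t φ) = ψ' (t φ)) : ψ = ψ' := by
  apply MulEquiv.toMonoidHom_injective
  exact mt_hom_ext φ h1 h2


lemma condG_unique (hZ : Subgroup.center H = ⊥) {α : MulAut H} {g g' : H}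
    (hg : CondG φ α g) (hg' : CondG φ α g') : g = g' := by
  have key : ∀ y : H, g * y * g⁻¹ = g' * y * g'⁻¹ := by
    intro y
    obtain ⟨x, rfl⟩ : ∃ x, φ (α x) = y := ⟨α⁻¹ (φ⁻¹ y), by simp [MulAut.apply_inv_self]⟩
    rw [← hg x, ← hg' x]
  have hmem : g'⁻¹ * g ∈ Subgroup.center H := by
    rw [Subgroup.mem_center_iff]
    intro y
    have h2 := key y
    have h3 : y * (g'⁻¹ * g) = g'⁻¹ * (g' * y * g'⁻¹) * g := by group
    rw [← h2] at h3
    rw [h3]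
    group
  rw [hZ, Subgroup.mem_bot, inv_mul_eq_one] at hmem
  exact hmem.symm

lemma condG_mul_conj {α : MulAut H} {g : H} (hg : CondG φ α g) (c : H) :
    CondG φ (α * MulAut.conj c) (α c * g * (φ (α c))⁻¹) := by
  intro x
  simp only [MulAut.mul_apply, MulAut.conj_apply, map_mul, map_inv]
  rw [hg x]
  group

lemma exists_condG_of_mem {α : MulAut H}
    (hα : (QuotientGroup.mk α : Out H) ∈
      Subgroup.centralizer ({(QuotientGroup.mk φ : Out H)} : Set (Out H))) :
    ∃ g, CondG φ α g := by
  have h := Subgroup.mem_centralizer_iff.mp hα (QuotientGroup.mk φ) rfl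
  rw [← QuotientGroup.mk_mul, ← QuotientGroup.mk_mul, QuotientGroup.eq] at h
  obtain ⟨c, hc⟩ := h
  have hc' : φ * α * MulAut.conj c = α * φ := by rw [hc]; group
  refine ⟨φ (α c), fun x => ?_⟩
  have hx : α (φ x) = (φ * α * MulAut.conj c) (φ⁻¹ (φ x)) := by
    rw [hc']
    simp [MulAut.inv_apply_self, MulAut.mul_apply]
  rw [hx]
  simp only [MulAut.mul_apply, MulAut.conj_apply, map_mul, map_inv,
    MulAut.inv_apply_self]

lemma mem_of_condG {α : MulAut H} {g : H} (hg : CondG φ α g) :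
    (QuotientGroup.mk α : Out H) ∈
      Subgroup.centralizer ({(QuotientGroup.mk φ : Out H)} : Set (Out H)) := by
  rw [Subgroup.mem_centralizer_iff]
  rintro y rfl
  rw [← QuotientGroup.mk_mul, ← QuotientGroup.mk_mul, QuotientGroup.eq]
  refine ⟨α⁻¹ (φ⁻¹ g), ?_⟩
  ext x
  simp only [MulAut.conj_apply, mul_inv_rev, MulAut.mul_apply]
  rw [hg x]
  simp [map_mul, map_inv, MulAut.inv_apply_self]

open Classical in
/-- The map sending an automorphism of `H` (whose class centralizes `[φ]`) to the class of
the induced automorphism of the mapping torus. -/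
noncomputable def Fmap (α : MulAut H) : Out (MappingTorus H φ) :=
  if h : ∃ g, CondG φ α g then QuotientGroup.mk (psiAut φ α h.choose h.choose_spec) else 1

lemma Fmap_eq (hZ : Subgroup.center H = ⊥) {α : MulAut H} {g : H} (hg : CondG φ α g) :
    Fmap φ α = QuotientGroup.mk (psiAut φ α g hg) := by
  have hex : ∃ g, CondG φ α g := ⟨g, hg⟩
  rw [Fmap, dif_pos hex]
  obtain rfl : hex.choose = g := condG_unique φ hZ hex.choose_spec hg
  rfl

lemma inl_t_inl_inv (c : H) :
    ι φ c * t φ * (ι φ c)⁻¹ = ι φ (c * (φ c)⁻¹) * t φ := by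
  have h := t_mul_inl φ c⁻¹
  calc ι φ c * t φ * (ι φ c)⁻¹
      = ι φ c * (t φ * ι φ c⁻¹ * (t φ)⁻¹) * t φ := by rw [map_inv]; group
    _ = ι φ c * ι φ (φ c⁻¹) * t φ := by rw [h]
    _ = ι φ (c * (φ c)⁻¹) * t φ := by rw [← map_mul, map_inv]

lemma Fmap_conj_mul (hZ : Subgroup.center H = ⊥) {α : MulAut H} {g : H}
    (hg : CondG φ α g) (c : H) :
    Fmap φ (α * MulAut.conj c) = Fmap φ α := by
  have hb := condG_mul_conj φ hg c
  rw [Fmap_eq φ hZ hg, Fmap_eq φ hZ hb]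
  have hpsi : psiAut φ (α * MulAut.conj c) _ hb =
      psiAut φ α g hg * MulAut.conj (ι φ c) := by
    apply psi_ext
    · intro h
      rw [MulAut.mul_apply, MulAut.conj_apply, ← map_inv (ι φ), ← map_mul, ← map_mul,
        psiAut_inl, psiAut_inl]
      simp [MulAut.mul_apply, MulAut.conj_apply]
    · rw [MulAut.mul_apply, MulAut.conj_apply, inl_t_inl_inv, map_mul, psiAut_inl,
        psiAut_t, psiAut_t, ← mul_assoc, ← map_mul]
      congr 2
      simp only [map_mul, map_inv, hg c]
      group
  rw [hpsi, QuotientGroup.mk_mul]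
  have h1 : (QuotientGroup.mk (MulAut.conj (ι φ c)) : Out (MappingTorus H φ)) = 1 :=
    (QuotientGroup.eq_one_iff _).mpr ⟨ι φ c, rfl⟩
  rw [h1, mul_one]


end Helpers

theorem exists_eta_centralizer_to_out (H : Type*) [Group H]
    (hZ : Subgroup.center H = ⊥)
    (hH : ∀ f : H →* Multiplicative ℤ, ¬ Function.Surjective f)
    (φ : MulAut H) :
    ∃ η : Subgroup.centralizer ({(QuotientGroup.mk φ : Out H)} : Set (Out H)) →*
        Out (MappingTorus H φ),
      η.ker = (Subgroup.zpowers (QuotientGroup.mk φ : Out H)).subgroupOf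
          (Subgroup.centralizer ({(QuotientGroup.mk φ : Out H)} : Set (Out H))) ∧
      ∀ x : Out (MappingTorus H φ),
        x ∈ η.range ↔ ∃ ψ : MulAut (MappingTorus H φ),
          (QuotientGroup.mk ψ : Out (MappingTorus H φ)) = x ∧
          Subgroup.map ψ.toMonoidHom (MappingTorus.ι φ).range = (MappingTorus.ι φ).range ∧
          ∃ g : H, ψ (MappingTorus.t φ) = MappingTorus.ι φ g * MappingTorus.t φ := by
  classical
  have wd : ∀ a b : MulAut H,
      (QuotientGroup.leftRel (MulAut.conj : H →* MulAut H).range) a b →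
      Fmap φ a = Fmap φ b := by
    intro a b hab
    rw [QuotientGroup.leftRel_apply] at hab
    obtain ⟨c, hc⟩ := hab
    have hb : b = a * MulAut.conj c := by rw [hc]; group
    subst hb
    by_cases hex : ∃ g, CondG φ a g
    · obtain ⟨g, hg⟩ := hex
      exact (Fmap_conj_mul φ hZ hg c).symm
    · have hex2 : ¬ ∃ g, CondG φ (a * MulAut.conj c) g := by
        rintro ⟨g', hg'⟩
        have h3 := condG_mul_conj φ hg' c⁻¹
        have h4 : a * MulAut.conj c * MulAut.conj c⁻¹ = a := by
          rw [map_inv]; group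
        rw [h4] at h3
        exact hex ⟨_, h3⟩
      rw [Fmap, dif_neg hex, Fmap, dif_neg hex2]
  let eta0 : Out H → Out (MappingTorus H φ) := fun x => Quotient.liftOn' x (Fmap φ) wd
  have eta0_mk : ∀ a : MulAut H, eta0 (QuotientGroup.mk a) = Fmap φ a := fun _ => rfl
  have hmul : ∀ x y : Subgroup.centralizer ({(QuotientGroup.mk φ : Out H)} : Set (Out H)),
      eta0 ((x * y : _) : Out H) = eta0 (x : Out H) * eta0 (y : Out H) := by
    intro x y
    obtain ⟨a, ha⟩ := QuotientGroup.mk_surjective (x : Out H)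
    obtain ⟨b, hb⟩ := QuotientGroup.mk_surjective (y : Out H)
    obtain ⟨ga, hga⟩ := exists_condG_of_mem φ (by rw [ha]; exact x.2)
    obtain ⟨gb, hgb⟩ := exists_condG_of_mem φ (by rw [hb]; exact y.2)
    have hab : CondG φ (a * b) (a gb * ga) := by
      intro x0
      calc (a * b) (φ x0) = a (b (φ x0)) := rfl
        _ = a (gb * φ (b x0) * gb⁻¹) := by rw [hgb x0]
        _ = a gb * a (φ (b x0)) * (a gb)⁻¹ := by simp [map_mul]
        _ = a gb * (ga * φ (a (b x0)) * ga⁻¹) * (a gb)⁻¹ := by rw [hga (b x0)]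
        _ = a gb * ga * φ ((a * b) x0) * (a gb * ga)⁻¹ := by
            rw [MulAut.mul_apply]; group
    rw [Subgroup.coe_mul, ← ha, ← hb, ← QuotientGroup.mk_mul, eta0_mk, eta0_mk, eta0_mk,
      Fmap_eq φ hZ hab, Fmap_eq φ hZ hga, Fmap_eq φ hZ hgb, ← QuotientGroup.mk_mul]
    congr 1
    apply psi_ext
    · intro h
      rw [MulAut.mul_apply, psiAut_inl, psiAut_inl, psiAut_inl, MulAut.mul_apply]
    · rw [MulAut.mul_apply, psiAut_t, psiAut_t, map_mul (psiAut φ a ga hga), psiAut_inl,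
        psiAut_t, map_mul (MappingTorus.ι φ)]
      group
  refine ⟨MonoidHom.mk' (fun x => eta0 (x : Out H)) hmul, ?_, ?_⟩
  · ext x
    rw [MonoidHom.mem_ker, Subgroup.mem_subgroupOf]
    obtain ⟨a, ha⟩ := QuotientGroup.mk_surjective (x : Out H)
    obtain ⟨g, hg⟩ := exists_condG_of_mem φ (by rw [ha]; exact x.2)
    show eta0 (x : Out H) = 1 ↔ _
    constructor
    · intro h1
      rw [← ha, eta0_mk, Fmap_eq φ hZ hg, QuotientGroup.eq_one_iff] at h1
      obtain ⟨u, hu⟩ := h1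
      have hnat : ∀ x0 : H,
          a x0 = u.left * ((φ ^ (Multiplicative.toAdd u.right)) x0) * u.left⁻¹ := by
        intro x0
        have h2 : MulAut.conj u (MappingTorus.ι φ x0) = MappingTorus.ι φ (a x0) := by rw [hu, psiAut_inl]
        rw [MulAut.conj_apply] at h2
        have h3 : u = SemidirectProduct.inl u.left * SemidirectProduct.inr u.right :=
          (SemidirectProduct.inl_left_mul_inr_right u).symm
        rw [h3] at h2
        have h4 : SemidirectProduct.inl u.left * SemidirectProduct.inr u.right * MappingTorus.ι φ x0 *
            (SemidirectProduct.inl u.left * SemidirectProduct.inr u.right)⁻¹ =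
            MappingTorus.ι φ (u.left * ((φ ^ (Multiplicative.toAdd u.right)) x0) * u.left⁻¹) := by
          calc SemidirectProduct.inl u.left * SemidirectProduct.inr u.right * MappingTorus.ι φ x0 *
              (SemidirectProduct.inl u.left * SemidirectProduct.inr u.right)⁻¹
              = SemidirectProduct.inl u.left *
                (SemidirectProduct.inr u.right * SemidirectProduct.inl x0 *
                  SemidirectProduct.inr u.right⁻¹) * (SemidirectProduct.inl u.left)⁻¹ := by
                rw [mul_inv_rev, map_inv]; group
            _ = SemidirectProduct.inl u.left *
                SemidirectProduct.inl ((zpowersHom (MulAut H) φ u.right) x0) *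
                (SemidirectProduct.inl u.left)⁻¹ := by
                rw [← SemidirectProduct.inl_aut]
            _ = MappingTorus.ι φ (u.left * ((φ ^ (Multiplicative.toAdd u.right)) x0) * u.left⁻¹) := by
                rw [← map_inv, ← map_mul, ← map_mul]
                rfl
        rw [h4] at h2
        exact (SemidirectProduct.inl_injective h2).symm
      have haa : a = MulAut.conj u.left * φ ^ (Multiplicative.toAdd u.right) := by
        ext x0
        rw [MulAut.mul_apply, MulAut.conj_apply]
        exact hnat x0
      rw [← ha, haa, QuotientGroup.mk_mul]
      have h5 : (QuotientGroup.mk (MulAut.conj u.left) : Out H) = 1 :=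
        (QuotientGroup.eq_one_iff _).mpr ⟨u.left, rfl⟩
      rw [h5, one_mul, QuotientGroup.mk_zpow]
      exact Subgroup.zpow_mem _ (Subgroup.mem_zpowers _) _
    · intro h1
      obtain ⟨n, hn⟩ := Subgroup.mem_zpowers_iff.mp h1
      have hcond : CondG φ (φ ^ n) 1 := by
        intro x0
        simp only [one_mul, inv_one, mul_one]
        have hcomm : φ ^ n * φ = φ * φ ^ n := by
          exact ((Commute.refl φ).zpow_left n).eq
        calc (φ ^ n) (φ x0) = (φ ^ n * φ) x0 := rfl
          _ = (φ * φ ^ n) x0 := by rw [hcomm]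
          _ = φ ((φ ^ n) x0) := rfl
      have hx : (x : Out H) = QuotientGroup.mk (φ ^ n) := by
        rw [← hn, QuotientGroup.mk_zpow]
      rw [hx, eta0_mk, Fmap_eq φ hZ hcond, QuotientGroup.eq_one_iff]
      refine ⟨SemidirectProduct.inr (Multiplicative.ofAdd n), ?_⟩
      apply psi_ext
      · intro h
        rw [MulAut.conj_apply, psiAut_inl, ← map_inv, ← SemidirectProduct.inl_aut]
        rfl
      · rw [MulAut.conj_apply, psiAut_t, map_one, one_mul, ← map_inv, ← map_mul, ← map_mul]
        congr 1
        rw [mul_comm (Multiplicative.ofAdd n), mul_assoc]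
        simp
  · intro y
    constructor
    · rintro ⟨x, rfl⟩
      obtain ⟨a, ha⟩ := QuotientGroup.mk_surjective (x : Out H)
      obtain ⟨g, hg⟩ := exists_condG_of_mem φ (by rw [ha]; exact x.2)
      refine ⟨psiAut φ a g hg, ?_, ?_, g, psiAut_t φ a g hg⟩
      · have h6 : eta0 (x : Out H) = QuotientGroup.mk (psiAut φ a g hg) := by
          rw [← ha, eta0_mk]
          exact Fmap_eq φ hZ hg
        exact h6.symm
      · ext z
        simp only [Subgroup.mem_map, MonoidHom.mem_range]
        constructor
        · rintro ⟨w, ⟨h, rfl⟩, rfl⟩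
          exact ⟨a h, (psiAut_inl φ a g hg h).symm⟩
        · rintro ⟨h, rfl⟩
          refine ⟨MappingTorus.ι φ (a⁻¹ h), ⟨a⁻¹ h, rfl⟩, ?_⟩
          show psiAut φ a g hg (MappingTorus.ι φ (a⁻¹ h)) = MappingTorus.ι φ h
          rw [psiAut_inl, MulAut.apply_inv_self]
    · rintro ⟨ψ, hmk, hmap, g, ht⟩
      have h1 : ∀ h : H, ∃ h', MappingTorus.ι φ h' = ψ (MappingTorus.ι φ h) := by
        intro h
        have hm : ψ (MappingTorus.ι φ h) ∈ Subgroup.map ψ.toMonoidHom (MappingTorus.ι φ).range :=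
          Subgroup.mem_map_of_mem _ ⟨h, rfl⟩
        rw [hmap] at hm
        obtain ⟨h', hh'⟩ := hm
        exact ⟨h', hh'⟩
      have h2 : ∀ h : H, ∃ h', MappingTorus.ι φ h' = ψ⁻¹ (MappingTorus.ι φ h) := by
        intro h
        have hm : MappingTorus.ι φ h ∈ Subgroup.map ψ.toMonoidHom (MappingTorus.ι φ).range := by
          rw [hmap]; exact ⟨h, rfl⟩
        obtain ⟨w, ⟨h', rfl⟩, hw⟩ := hm
        refine ⟨h', ?_⟩
        show MappingTorus.ι φ h' = ψ⁻¹ (MappingTorus.ι φ h)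
        rw [← hw]
        exact (MulAut.inv_apply_self _ ψ _).symm
      have hinj : Function.Injective (MappingTorus.ι φ) :=
        SemidirectProduct.inl_injective (φ := zpowersHom (MulAut H) φ)
      let f : H → H := fun h => (h1 h).choose
      have hf : ∀ h, MappingTorus.ι φ (f h) = ψ (MappingTorus.ι φ h) := fun h => (h1 h).choose_spec
      let f' : H → H := fun h => (h2 h).choose
      have hf' : ∀ h, MappingTorus.ι φ (f' h) = ψ⁻¹ (MappingTorus.ι φ h) := fun h => (h2 h).choose_spec
      let α : MulAut H :=
        { toFun := f
          invFun := f'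
          left_inv := by
            intro h
            apply hinj
            rw [hf', hf]
            exact MulAut.inv_apply_self _ ψ _
          right_inv := by
            intro h
            apply hinj
            rw [hf, hf']
            exact MulAut.apply_inv_self _ ψ _
          map_mul' := by
            intro u v
            apply hinj
            calc MappingTorus.ι φ (f (u * v)) = ψ (MappingTorus.ι φ (u * v)) := hf _
              _ = ψ (MappingTorus.ι φ u * MappingTorus.ι φ v) := by rw [map_mul]
              _ = ψ (MappingTorus.ι φ u) * ψ (MappingTorus.ι φ v) := map_mul ψ _ _
              _ = MappingTorus.ι φ (f u) * MappingTorus.ι φ (f v) := by rw [hf, hf]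
              _ = MappingTorus.ι φ (f u * f v) := (map_mul _ _ _).symm }
      have hfα : ∀ h, MappingTorus.ι φ (α h) = ψ (MappingTorus.ι φ h) := hf
      have hga : CondG φ α g := by
        intro x0
        apply hinj
        have e2 : MappingTorus.ι φ (φ x0) = MappingTorus.t φ * MappingTorus.ι φ x0 * (MappingTorus.t φ)⁻¹ := (t_mul_inl φ x0).symm
        have e3 : MappingTorus.t φ * MappingTorus.ι φ (α x0) * (MappingTorus.t φ)⁻¹ = MappingTorus.ι φ (φ (α x0)) := t_mul_inl φ _
        rw [hfα, e2, map_mul, map_mul, map_inv, ht, ← hfα x0]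
        calc MappingTorus.ι φ g * MappingTorus.t φ * MappingTorus.ι φ (α x0) * (MappingTorus.ι φ g * MappingTorus.t φ)⁻¹
            = MappingTorus.ι φ g * (MappingTorus.t φ * MappingTorus.ι φ (α x0) * (MappingTorus.t φ)⁻¹) * (MappingTorus.ι φ g)⁻¹ := by
              rw [mul_inv_rev]; group
          _ = MappingTorus.ι φ g * MappingTorus.ι φ (φ (α x0)) * (MappingTorus.ι φ g)⁻¹ := by rw [e3]
          _ = MappingTorus.ι φ (g * φ (α x0) * g⁻¹) := by simp [map_mul, map_inv, mul_assoc]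
      refine ⟨⟨QuotientGroup.mk α, mem_of_condG φ hga⟩, ?_⟩
      show eta0 (QuotientGroup.mk α) = y
      rw [eta0_mk, Fmap_eq φ hZ hga, ← hmk]
      congr 1
      apply psi_ext
      · intro h
        rw [psiAut_inl]
        exact hfα h
      · rw [psiAut_t]
        exact ht.symm
end

section
/- Let H be a group with trivial center and φ an automorphism of H. Suppose δ₁, δ₂ are automorphisms of H and g₁, g₂ ∈ H satisfy δᵢ(φ(h)) = gᵢ·φ(δᵢ(h))·gᵢ⁻¹ for all h ∈ H (i = 1, 2), and suppose δ₂ = δ₁ ∘ γ_k for some k ∈ H, where γ_k is the inner automorphism x ↦ k x k⁻¹ of H. Let αᵢ be the automorphism of H_φ with αᵢ(ι(h)) = ι(δᵢ(h)) for all h ∈ H and αᵢ(t) = ι(gᵢ)·t. Then α₁ and α₂ differ by an inner automorphism of H_φ, i.e. α₂⁻¹ ∘ α₁ is an inner automorphism of H_φ; in particular [α₁] = [α₂] in Out(H_φ). -/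
theorem alpha_well_defined_up_to_inner (H : Type*) [Group H]
    (hZ : Subgroup.center H = ⊥)
    (φ δ₁ δ₂ : MulAut H) (g₁ g₂ k : H)
    (h₁ : ∀ h : H, δ₁ (φ h) = g₁ * φ (δ₁ h) * g₁⁻¹)
    (h₂ : ∀ h : H, δ₂ (φ h) = g₂ * φ (δ₂ h) * g₂⁻¹)
    (hδ : δ₂ = δ₁ * MulAut.conj k)
    (α₁ α₂ : MulAut (MappingTorus H φ))
    (hα₁ : (∀ h : H, α₁ (MappingTorus.ι φ h) = MappingTorus.ι φ (δ₁ h)) ∧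
      α₁ (MappingTorus.t φ) = MappingTorus.ι φ g₁ * MappingTorus.t φ)
    (hα₂ : (∀ h : H, α₂ (MappingTorus.ι φ h) = MappingTorus.ι φ (δ₂ h)) ∧
      α₂ (MappingTorus.t φ) = MappingTorus.ι φ g₂ * MappingTorus.t φ) :
    (∃ x : MappingTorus H φ, α₂⁻¹ * α₁ = MulAut.conj x) ∧
    (QuotientGroup.mk α₁ : Out (MappingTorus H φ)) = QuotientGroup.mk α₂ := by
  obtain ⟨hα₁H, hα₁t⟩ := hα₁
  obtain ⟨hα₂H, hα₂t⟩ := hα₂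
  have hδ' : ∀ h : H, δ₂ h = δ₁ (k * h * k⁻¹) := by
    intro h; rw [hδ]; rfl
  -- key relation between g₁ and g₂
  have hab : δ₁ k * g₁ = g₂ * φ (δ₁ k) := by
    set a := δ₁ k * g₁ with ha
    set b := g₂ * φ (δ₁ k) with hb
    have hc : ∀ y : H, a * y * a⁻¹ = b * y * b⁻¹ := by
      intro y
      have hy : φ (δ₁ (δ₁.symm (φ.symm y))) = y := by simp
      set h := δ₁.symm (φ.symm y) with hh
      calc a * y * a⁻¹ = δ₁ k * (g₁ * φ (δ₁ h) * g₁⁻¹) * (δ₁ k)⁻¹ := by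
            rw [hy, ha]; group
        _ = δ₁ k * δ₁ (φ h) * (δ₁ k)⁻¹ := by rw [h₁]
        _ = δ₁ (k * φ h * k⁻¹) := by simp [map_mul]
        _ = δ₂ (φ h) := (hδ' (φ h)).symm
        _ = g₂ * φ (δ₂ h) * g₂⁻¹ := h₂ h
        _ = g₂ * φ (δ₁ (k * h * k⁻¹)) * g₂⁻¹ := by rw [hδ' h]
        _ = g₂ * (φ (δ₁ k) * y * (φ (δ₁ k))⁻¹) * g₂⁻¹ := by
            rw [← hy]; simp [map_mul, mul_assoc]
        _ = b * y * b⁻¹ := by rw [hb]; group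
    have hcen : b⁻¹ * a ∈ Subgroup.center H := by
      rw [Subgroup.mem_center_iff]
      intro y
      have h1 : b⁻¹ * (a * y * a⁻¹) * a = b⁻¹ * (b * y * b⁻¹) * a := by rw [hc y]
      calc y * (b⁻¹ * a) = b⁻¹ * (b * y * b⁻¹) * a := by group
        _ = b⁻¹ * (a * y * a⁻¹) * a := h1.symm
        _ = (b⁻¹ * a) * y := by group
    rw [hZ, Subgroup.mem_bot] at hcen
    calc a = b * (b⁻¹ * a) := by group
      _ = b := by rw [hcen, mul_one]
  have gkey : δ₂ (k⁻¹ * φ k) * g₂ = g₁ := by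
    have h3 : δ₂ (k⁻¹ * φ k) = δ₁ (φ k) * (δ₁ k)⁻¹ := by
      rw [hδ' (k⁻¹ * φ k)]
      have h5 : k * (k⁻¹ * φ k) * k⁻¹ = φ k * k⁻¹ := by group
      rw [h5, map_mul, map_inv]
    have h4 : φ (δ₁ k) = g₂⁻¹ * (δ₁ k * g₁) := by rw [hab]; group
    rw [h3, h₁ k, h4]
    group
  -- the conjugating element
  set x : MappingTorus H φ := MappingTorus.ι φ k⁻¹ with hx
  have tkey : MulAut.conj x (MappingTorus.t φ) =
      MappingTorus.ι φ (k⁻¹ * φ k) * MappingTorus.t φ := by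
    have haut : (MappingTorus.ι φ (φ k) : MappingTorus H φ) =
        MappingTorus.t φ * MappingTorus.ι φ k * (MappingTorus.t φ)⁻¹ := by
      have := SemidirectProduct.inl_aut (φ := zpowersHom (MulAut H) φ)
        (Multiplicative.ofAdd 1) k
      simpa using this
    rw [MulAut.conj_apply, hx]
    calc MappingTorus.ι φ k⁻¹ * MappingTorus.t φ * (MappingTorus.ι φ k⁻¹)⁻¹
        = MappingTorus.ι φ k⁻¹ * (MappingTorus.t φ * MappingTorus.ι φ k *
          (MappingTorus.t φ)⁻¹) * MappingTorus.t φ := by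
          rw [← map_inv, inv_inv]; group
      _ = MappingTorus.ι φ k⁻¹ * MappingTorus.ι φ (φ k) * MappingTorus.t φ := by
          rw [haut]
      _ = MappingTorus.ι φ (k⁻¹ * φ k) * MappingTorus.t φ := by rw [map_mul]
  have key : α₁ = α₂ * MulAut.conj x := by
    have hm : α₁.toMonoidHom = (α₂ * MulAut.conj x).toMonoidHom := by
      apply SemidirectProduct.hom_ext
      · refine MonoidHom.ext fun h => ?_
        show α₁ (MappingTorus.ι φ h) = α₂ (MulAut.conj x (MappingTorus.ι φ h))
        have hconj : MulAut.conj x (MappingTorus.ι φ h) =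
            MappingTorus.ι φ (k⁻¹ * h * k) := by
          rw [MulAut.conj_apply, hx, ← map_inv, inv_inv, ← map_mul, ← map_mul]
        rw [hconj, hα₁H, hα₂H, hδ']
        congr 2
        group
      · apply MonoidHom.ext_mint
        show α₁ (MappingTorus.t φ) = α₂ (MulAut.conj x (MappingTorus.t φ))
        rw [tkey, map_mul, hα₂H, hα₁t, hα₂t, ← mul_assoc, ← map_mul, gkey]
    exact MulEquiv.toMonoidHom_injective hm
  constructor
  · exact ⟨x, by rw [key, inv_mul_cancel_left]⟩
  · refine (QuotientGroup.eq (s := (MulAut.conj : MappingTorus H φ →* _).range)).2 ?_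
    exact ⟨x⁻¹, by rw [map_inv, key]; group⟩
end

section
/- Let H be a group with trivial center and admitting no surjective group homomorphism onto ℤ, let φ, δ be automorphisms of H, and let g ∈ H satisfy δ(φ(h)) = g·φ(δ(h))·g⁻¹ for all h ∈ H. Let α_δ be the automorphism of H_φ with α_δ(ι(h)) = ι(δ(h)) for all h ∈ H and α_δ(t) = ι(g)·t. If α_δ is an inner automorphism of H_φ, then [δ] lies in the cyclic subgroup of Out(H) generated by [φ]; that is, there exist j ∈ ℤ and k ∈ H such that δ(h) = k·φ^j(h)·k⁻¹ for all h ∈ H. -/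
theorem delta_in_zpowers_phi_of_alpha_inner (H : Type*) [Group H]
    (hZ : Subgroup.center H = ⊥)
    (hH : ∀ f : H →* Multiplicative ℤ, ¬ Function.Surjective f)
    (φ δ : MulAut H) (g : H)
    (hg : ∀ h : H, δ (φ h) = g * φ (δ h) * g⁻¹)
    (α : MulAut (MappingTorus H φ))
    (hα₁ : ∀ h : H, α (MappingTorus.ι φ h) = MappingTorus.ι φ (δ h))
    (hα₂ : α (MappingTorus.t φ) = MappingTorus.ι φ g * MappingTorus.t φ)
    (hinner : ∃ x : MappingTorus H φ, α = MulAut.conj x) :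
    ∃ (j : ℤ) (k : H), ∀ h : H, δ h = k * (φ ^ j) h * k⁻¹ := by
  obtain ⟨x, hx⟩ := hinner
  refine ⟨Multiplicative.toAdd x.right, x.left, fun h => ?_⟩
  have := congrArg SemidirectProduct.left ((hα₁ h).symm.trans (by rw [hx]))
  simp [MulAut.conj_apply, SemidirectProduct.mul_left, SemidirectProduct.inv_left,
    zpowersHom_apply, mul_assoc] at this
  simpa [mul_assoc] using this
end
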